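/- arXiv:1801.05887 — 2 statements merged into one kernel-verified Lean document; each statement's English description precedes it below -/
import Mathlib

section
/- (Tanaka, pathwise uniqueness) Let n ≥ 1, let Ω ⊂ ℝⁿ be a bounded open convex set, let W be an n-dimensional standard Brownian motion started at 0 on a probability space, and let x ∈ Ω̄. Suppose (X, μ, 𝐧) and (X', μ', 𝐧') both satisfy: the process has almost surely continuous paths contained in Ω̄; almost surely X_t = x + W_t + ∫_{[0,t]} 𝐧(s) μ(ds) for all t ≥ 0 (respectively X'_t = x + W_t + ∫_{[0,t]} 𝐧'(s) μ'(ds)); μ({t ≥ 0 : X_t ∉ ∂Ω}) = 0 (respectively for μ', X'); and for μ-almost every s, |𝐧(s)| = 1 and Ω ⊆ {y : ⟨𝐧(s), y − X_s⟩ ≥ 0} (respectively for 𝐧', μ', X'). Then almost surely X_t = X'_t for all t ≥ 0. -/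
open MeasureTheory ProbabilityTheory Real

/-- The function `F_d(t, k)`: the series
`∑ₙ exp(−(π²(2n+1)²/(8d²))·t) · (4(−1)ⁿ/(π(2n+1))) · cos((2n+1)πk/(2d))`. -/
noncomputable def Fd (d t k : ℝ) : ℝ :=
  ∑' m : ℕ, Real.exp (-(Real.pi ^ 2 * (2 * (m : ℝ) + 1) ^ 2 / (8 * d ^ 2)) * t) *
    (4 * (-1 : ℝ) ^ m / (Real.pi * (2 * (m : ℝ) + 1))) *
    Real.cos ((2 * (m : ℝ) + 1) * Real.pi * k / (2 * d))

/-- `W` is a standard Brownian motion started at `0` (with values in a real inner product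
space `E`), under the measure `P`: a.s. continuous paths, `W 0 = 0`, independent increments
over consecutive intervals, and every increment `W t - W s` (for `0 ≤ s ≤ t`) is a centered
Gaussian with covariance `(t - s) • Id`, expressed coordinate-freely by the fact that
`⟪v, W t - W s⟫` has law `N(0, (t - s) * ‖v‖²)` for every vector `v`. -/
def IsStdBM {Ω' : Type*} [MeasurableSpace Ω'] (P : Measure Ω') {E : Type*}
    [NormedAddCommGroup E] [InnerProductSpace ℝ E] [MeasurableSpace E] [BorelSpace E]
    (W : ℝ → Ω' → E) : Prop :=
  (∀ t, Measurable (W t)) ∧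
  (∀ᵐ ω ∂P, Continuous fun t : ℝ => W t ω) ∧
  (∀ᵐ ω ∂P, W 0 ω = 0) ∧
  (∀ s t : ℝ, 0 ≤ s → s ≤ t → ∀ v : E,
    Measure.map (fun ω => (inner ℝ v (W t ω - W s ω) : ℝ)) P
      = gaussianReal 0 (Real.toNNReal ((t - s) * ‖v‖ ^ 2))) ∧
  (∀ u : ℕ → ℝ, Monotone u → 0 ≤ u 0 →
    iIndepFun (fun j ω => W (u (j + 1)) ω - W (u j) ω) P)

/-- `X` is a reflecting Brownian motion in the set `D` under the measure `P`:
a.s. continuous paths contained in the closure of `D`, and there exist a standard Brownian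
motion `W` started at `0` independent of `X 0`, a random positive measure `μm` on `[0, ∞)`
finite on compact sets, and a random function `nv` such that a.s.
`X t = X 0 + W t + ∫_{[0,t]} nv s dμm`, `μm` is carried by the times when `X` is on the
boundary of `D`, and for `μm`-a.e. `s` the vector `nv s` is a unit inward normal vector of a
supporting hyperplane of `D` at `X s`. -/
def IsRBM {Ω' : Type*} [MeasurableSpace Ω'] (P : Measure Ω') {E : Type*}
    [NormedAddCommGroup E] [InnerProductSpace ℝ E] [MeasurableSpace E] [BorelSpace E]
    (D : Set E) (X : ℝ → Ω' → E) : Prop :=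
  (∀ t, Measurable (X t)) ∧
  (∀ᵐ ω ∂P, ContinuousOn (fun t : ℝ => X t ω) (Set.Ici 0) ∧
    ∀ t, 0 ≤ t → X t ω ∈ closure D) ∧
  ∃ (W : ℝ → Ω' → E) (μm : Ω' → Measure ℝ) (nv : Ω' → ℝ → E),
    IsStdBM P W ∧
    IndepFun (X 0) (fun ω => fun t => W t ω) P ∧
    (∀ ω, ∀ K : Set ℝ, IsCompact K → μm ω K < ⊤) ∧
    (∀ ω, μm ω (Set.Iio 0) = 0) ∧
    (∀ᵐ ω ∂P,
      (∀ t, 0 ≤ t → X t ω = X 0 ω + W t ω + ∫ s in Set.Icc 0 t, nv ω s ∂(μm ω)) ∧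
      μm ω {s | 0 ≤ s ∧ X s ω ∉ frontier D} = 0 ∧
      (∀ᵐ s ∂(μm ω), ‖nv ω s‖ = 1 ∧
        D ⊆ {y | 0 ≤ (inner ℝ (nv ω s) (y - X s ω) : ℝ)}))

/-- The uniform probability measure `σ` on `D`. -/
noncomputable def unifOn {E : Type*} [MeasureSpace E] (D : Set E) : Measure E :=
  (volume D)⁻¹ • volume.restrict D



open Filter
open scoped RealInnerProductSpace
set_option linter.unusedSectionVars false

namespace TanakaAux

variable {E : Type*} [NormedAddCommGroup E] [InnerProductSpace ℝ E] [CompleteSpace E]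

lemma int_of_bdd {α : Type*} [MeasurableSpace α] {m : Measure α} [IsFiniteMeasure m]
    {F : Type*} [NormedAddCommGroup F] {φ : α → F} (hm : AEStronglyMeasurable φ m)
    {C : ℝ} (hb : ∀ x, ‖φ x‖ ≤ C) : Integrable φ m :=
  (integrable_const C).mono' hm (Filter.Eventually.of_forall hb)

lemma smeas_inner_pair {g h : ℝ → E} (hg : StronglyMeasurable g) (hh : StronglyMeasurable h) :
    StronglyMeasurable fun p : ℝ × ℝ => ⟪g p.2, h p.1⟫ :=
  continuous_inner.comp_stronglyMeasurable
    ((hg.comp_measurable measurable_snd).prodMk (hh.comp_measurable measurable_fst))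

lemma smeas_iic (m : Measure ℝ) [IsFiniteMeasure m] {g : ℝ → E} (hg : StronglyMeasurable g) :
    StronglyMeasurable fun v => ∫ u in Set.Iic v, g u ∂m := by
  have hset : MeasurableSet {p : ℝ × ℝ | p.2 ≤ p.1} :=
    (isClosed_le continuous_snd continuous_fst).measurableSet
  have hF : StronglyMeasurable
      (Set.indicator {p : ℝ × ℝ | p.2 ≤ p.1} (fun q : ℝ × ℝ => g q.2)) :=
    (hg.comp_measurable measurable_snd).indicator hset
  have h2 := hF.integral_prod_right' (ν := m)
  have : (fun v : ℝ => ∫ u in Set.Iic v, g u ∂m)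
      = fun v : ℝ => ∫ u, Set.indicator {p : ℝ × ℝ | p.2 ≤ p.1} (fun q : ℝ × ℝ => g q.2) (v, u) ∂m := by
    funext v
    rw [← integral_indicator measurableSet_Iic]
    refine integral_congr_ae (Filter.Eventually.of_forall fun u => ?_)
    by_cases hu : u ≤ v <;> simp [Set.indicator_apply, Set.mem_Iic, hu]
  rw [this]
  exact h2

lemma sing_int (m : Measure ℝ) (φ : ℝ → E) (s : ℝ) :
    ∫ u in ({s} : Set ℝ), φ u ∂m = (m {s}).toReal • φ s := by
  rw [Measure.restrict_singleton, integral_smul_measure, integral_dirac]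

lemma sing_int_real (m : Measure ℝ) (φ : ℝ → ℝ) (s : ℝ) :
    ∫ u in ({s} : Set ℝ), φ u ∂m = (m {s}).toReal * φ s := by
  rw [Measure.restrict_singleton, integral_smul_measure, integral_dirac, smul_eq_mul]


lemma J_add (m₁ m₂ : Measure ℝ) [IsFiniteMeasure m₁] [IsFiniteMeasure m₂]
    {g h : ℝ → E} (hg : StronglyMeasurable g) (hh : StronglyMeasurable h)
    (hgb : ∀ u, ‖g u‖ ≤ 1) (hhb : ∀ u, ‖h u‖ ≤ 1) :
    (∫ v, ⟪∫ u in Set.Iic v, g u ∂m₁, h v⟫ ∂m₂)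
      + (∫ v, ⟪∫ u in Set.Iic v, h u ∂m₂, g v⟫ ∂m₁)
    = ⟪∫ u, g u ∂m₁, ∫ v, h v ∂m₂⟫
      + ∫ v, (m₁ {v}).toReal * ⟪g v, h v⟫ ∂m₂ := by
  classical
  set GF : ℝ × ℝ → ℝ := fun p => ⟪g p.2, h p.1⟫ with hGF
  set GF' : ℝ × ℝ → ℝ := fun q => ⟪h q.2, g q.1⟫ with hGF'
  have hgi : Integrable g m₁ := int_of_bdd hg.aestronglyMeasurable hgb
  have hhi : Integrable h m₂ := int_of_bdd hh.aestronglyMeasurable hhb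
  have hGFsm : StronglyMeasurable GF := smeas_inner_pair hg hh
  have hGF'sm : StronglyMeasurable GF' := smeas_inner_pair hh hg
  have hGFb : ∀ p, ‖GF p‖ ≤ 1 := by
    intro p
    rw [Real.norm_eq_abs]
    refine (abs_real_inner_le_norm _ _).trans ?_
    have := hgb p.2; have := hhb p.1
    nlinarith [norm_nonneg (g p.2), norm_nonneg (h p.1)]
  have hGF'b : ∀ p, ‖GF' p‖ ≤ 1 := by
    intro p
    rw [Real.norm_eq_abs]
    refine (abs_real_inner_le_norm _ _).trans ?_
    have := hgb p.1; have := hhb p.2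
    nlinarith [norm_nonneg (g p.1), norm_nonneg (h p.2)]
  have hSLE : MeasurableSet {p : ℝ × ℝ | p.2 ≤ p.1} :=
    (isClosed_le continuous_snd continuous_fst).measurableSet
  have hSGE : MeasurableSet {p : ℝ × ℝ | p.1 ≤ p.2} :=
    (isClosed_le continuous_fst continuous_snd).measurableSet
  have hSEQ : MeasurableSet {p : ℝ × ℝ | p.2 = p.1} :=
    (isClosed_eq continuous_snd continuous_fst).measurableSet
  set K1 : ℝ × ℝ → ℝ := Set.indicator {p : ℝ × ℝ | p.2 ≤ p.1} GF with hK1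
  set K2 : ℝ × ℝ → ℝ := Set.indicator {p : ℝ × ℝ | p.1 ≤ p.2} GF with hK2
  set KD : ℝ × ℝ → ℝ := Set.indicator {p : ℝ × ℝ | p.2 = p.1} GF with hKD
  set K1' : ℝ × ℝ → ℝ := Set.indicator {p : ℝ × ℝ | p.2 ≤ p.1} GF' with hK1'
  have hK1i : Integrable K1 (m₂.prod m₁) :=
    int_of_bdd (hGFsm.indicator hSLE).aestronglyMeasurable
      (fun p => (norm_indicator_le_norm_self _ _).trans (hGFb p))
  have hK2i : Integrable K2 (m₂.prod m₁) :=
    int_of_bdd (hGFsm.indicator hSGE).aestronglyMeasurable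
      (fun p => (norm_indicator_le_norm_self _ _).trans (hGFb p))
  have hKDi : Integrable KD (m₂.prod m₁) :=
    int_of_bdd (hGFsm.indicator hSEQ).aestronglyMeasurable
      (fun p => (norm_indicator_le_norm_self _ _).trans (hGFb p))
  have hGFi : Integrable GF (m₂.prod m₁) := int_of_bdd hGFsm.aestronglyMeasurable hGFb
  have hK1'i : Integrable K1' (m₁.prod m₂) :=
    int_of_bdd (hGF'sm.indicator hSLE).aestronglyMeasurable
      (fun p => (norm_indicator_le_norm_self _ _).trans (hGF'b p))
  -- T1
  have T1 : (∫ v, ⟪∫ u in Set.Iic v, g u ∂m₁, h v⟫ ∂m₂)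
      = ∫ v, ∫ u, K1 (v, u) ∂m₁ ∂m₂ := by
    refine integral_congr_ae (Filter.Eventually.of_forall fun v => ?_)
    dsimp only
    rw [real_inner_comm, ← integral_inner hgi.integrableOn (h v),
      ← integral_indicator measurableSet_Iic]
    refine integral_congr_ae (Filter.Eventually.of_forall fun u => ?_)
    by_cases hu : u ≤ v <;>
      simp [hK1, hGF, Set.indicator_apply, Set.mem_Iic, hu, real_inner_comm]
  have T1' : (∫ v, ∫ u, K1 (v, u) ∂m₁ ∂m₂) = ∫ p, K1 p ∂(m₂.prod m₁) :=
    integral_integral (by exact hK1i)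
  -- T2
  have T2 : (∫ v, ⟪∫ u in Set.Iic v, h u ∂m₂, g v⟫ ∂m₁)
      = ∫ v, ∫ u, K1' (v, u) ∂m₂ ∂m₁ := by
    refine integral_congr_ae (Filter.Eventually.of_forall fun v => ?_)
    dsimp only
    rw [real_inner_comm, ← integral_inner hhi.integrableOn (g v),
      ← integral_indicator measurableSet_Iic]
    refine integral_congr_ae (Filter.Eventually.of_forall fun u => ?_)
    by_cases hu : u ≤ v <;>
      simp [hK1', hGF', Set.indicator_apply, Set.mem_Iic, hu, real_inner_comm]
  have T2' : (∫ v, ∫ u, K1' (v, u) ∂m₂ ∂m₁) = ∫ u, ∫ v, K1' (v, u) ∂m₁ ∂m₂ :=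
    integral_integral_swap (by exact hK1'i)
  have T2'' : (∫ u, ∫ v, K1' (v, u) ∂m₁ ∂m₂) = ∫ v, ∫ u, K2 (v, u) ∂m₁ ∂m₂ := by
    refine integral_congr_ae (Filter.Eventually.of_forall fun u => ?_)
    refine integral_congr_ae (Filter.Eventually.of_forall fun v => ?_)
    by_cases huv : u ≤ v <;>
      simp [hK1', hK2, hGF, hGF', Set.indicator_apply, huv, real_inner_comm]
  have T2''' : (∫ v, ∫ u, K2 (v, u) ∂m₁ ∂m₂) = ∫ p, K2 p ∂(m₂.prod m₁) :=
    integral_integral (by exact hK2i)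
  -- sum
  have hsum : (∫ p, K1 p ∂(m₂.prod m₁)) + (∫ p, K2 p ∂(m₂.prod m₁))
      = (∫ p, GF p ∂(m₂.prod m₁)) + ∫ p, KD p ∂(m₂.prod m₁) := by
    rw [← integral_add hK1i hK2i, ← integral_add hGFi hKDi]
    refine integral_congr_ae (Filter.Eventually.of_forall fun p => ?_)
    by_cases h1 : p.2 ≤ p.1 <;> by_cases h2 : p.1 ≤ p.2
    · have he : p.2 = p.1 := le_antisymm h1 h2
      simp [hK1, hK2, hKD, Set.indicator_apply, h1, h2, he]
    · have hne : ¬ p.2 = p.1 := fun he => h2 (le_of_eq he.symm)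
      simp [hK1, hK2, hKD, Set.indicator_apply, h1, h2, hne]
    · have hne : ¬ p.2 = p.1 := fun he => h1 (le_of_eq he)
      simp [hK1, hK2, hKD, Set.indicator_apply, h1, h2, hne]
    · exact absurd (le_total p.2 p.1) (by simp [h1, h2])
  have hfull0 : (∫ v, ∫ u, GF (v, u) ∂m₁ ∂m₂) = ∫ p, GF p ∂(m₂.prod m₁) :=
    integral_integral (by exact hGFi)
  have hfull : (∫ p, GF p ∂(m₂.prod m₁)) = ⟪∫ u, g u ∂m₁, ∫ v, h v ∂m₂⟫ := by
    rw [← hfull0]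
    have : ∀ v : ℝ, (∫ u, GF (v, u) ∂m₁) = ⟪∫ u, g u ∂m₁, h v⟫ := by
      intro v
      rw [real_inner_comm, ← integral_inner hgi (h v)]
      exact integral_congr_ae (Filter.Eventually.of_forall fun u => real_inner_comm _ _)
    rw [integral_congr_ae (Filter.Eventually.of_forall this)]
    exact integral_inner hhi _
  have hdiag : (∫ p, KD p ∂(m₂.prod m₁))
      = ∫ v, (m₁ {v}).toReal * ⟪g v, h v⟫ ∂m₂ := by
    have hKD0 : (∫ v, ∫ u, KD (v, u) ∂m₁ ∂m₂) = ∫ p, KD p ∂(m₂.prod m₁) :=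
      integral_integral (by exact hKDi)
    rw [← hKD0]
    refine integral_congr_ae (Filter.Eventually.of_forall fun v => ?_)
    dsimp only
    have : (fun u => KD (v, u)) = Set.indicator ({v} : Set ℝ) (fun u => ⟪g u, h v⟫) := by
      funext u
      by_cases hu : u = v <;> simp [hKD, hGF, Set.indicator_apply, hu]
    rw [this, integral_indicator (measurableSet_singleton v), sing_int_real]
  rw [T1, T1', T2, T2', T2'', T2''', hsum, hfull, hdiag]


lemma int_inner_of_bdd {m : Measure ℝ} [IsFiniteMeasure m] {φ ψ : ℝ → E}
    (hφ : StronglyMeasurable φ) (hψ : StronglyMeasurable ψ)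
    {C : ℝ} (hφb : ∀ v, ‖φ v‖ ≤ C) (hψb : ∀ v, ‖ψ v‖ ≤ 1) :
    Integrable (fun v => ⟪φ v, ψ v⟫) m := by
  refine int_of_bdd
    (continuous_inner.comp_stronglyMeasurable (hφ.prodMk hψ)).aestronglyMeasurable
    (C := C) ?_
  intro v
  rw [Real.norm_eq_abs]
  refine (abs_real_inner_le_norm _ _).trans ?_
  have h1 := hφb v; have h2 := hψb v
  nlinarith [norm_nonneg (φ v), norm_nonneg (ψ v)]

lemma core_ineq (ν ρ : Measure ℝ) [IsFiniteMeasure ν] [IsFiniteMeasure ρ]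
    {f g : ℝ → E} (hf : StronglyMeasurable f) (hg : StronglyMeasurable g)
    (hfb : ∀ u, ‖f u‖ ≤ 1) (hgb : ∀ u, ‖g u‖ ≤ 1)
    (hatom : ∀ s : ℝ, (ν {s}).toReal • f s = (ρ {s}).toReal • g s)
    (hsign1 : ∀ᵐ v ∂ν, ⟪f v, (∫ u in Set.Iic v, f u ∂ν) - ∫ u in Set.Iic v, g u ∂ρ⟫ ≤ 0)
    (hsign2 : ∀ᵐ v ∂ρ, 0 ≤ ⟪g v, (∫ u in Set.Iic v, f u ∂ν) - ∫ u in Set.Iic v, g u ∂ρ⟫) :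
    (∫ u, f u ∂ν) = ∫ u, g u ∂ρ := by
  have hZfm : StronglyMeasurable fun v => ∫ u in Set.Iic v, f u ∂ν := smeas_iic ν hf
  have hZgm : StronglyMeasurable fun v => ∫ u in Set.Iic v, g u ∂ρ := smeas_iic ρ hg
  have hZfb : ∀ v, ‖∫ u in Set.Iic v, f u ∂ν‖ ≤ (ν Set.univ).toReal := by
    intro v
    refine (norm_setIntegral_le_of_norm_le_const (measure_lt_top ν _)
      (fun u _ => hfb u)).trans ?_
    rw [one_mul]
    exact ENNReal.toReal_mono (measure_ne_top ν _) (measure_mono (Set.subset_univ _))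
  have hZgb : ∀ v, ‖∫ u in Set.Iic v, g u ∂ρ‖ ≤ (ρ Set.univ).toReal := by
    intro v
    refine (norm_setIntegral_le_of_norm_le_const (measure_lt_top ρ _)
      (fun u _ => hgb u)).trans ?_
    rw [one_mul]
    exact ENNReal.toReal_mono (measure_ne_top ρ _) (measure_mono (Set.subset_univ _))
  have hJ1i : Integrable (fun v => ⟪∫ u in Set.Iic v, f u ∂ν, f v⟫) ν :=
    int_inner_of_bdd hZfm hf hZfb hfb
  have hJ2i : Integrable (fun v => ⟪∫ u in Set.Iic v, g u ∂ρ, f v⟫) ν :=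
    int_inner_of_bdd hZgm hf hZgb hfb
  have hJ3i : Integrable (fun v => ⟪∫ u in Set.Iic v, f u ∂ν, g v⟫) ρ :=
    int_inner_of_bdd hZfm hg hZfb hgb
  have hJ4i : Integrable (fun v => ⟪∫ u in Set.Iic v, g u ∂ρ, g v⟫) ρ :=
    int_inner_of_bdd hZgm hg hZgb hgb
  have split1 : (∫ v, ⟪f v, (∫ u in Set.Iic v, f u ∂ν) - ∫ u in Set.Iic v, g u ∂ρ⟫ ∂ν)
      = (∫ v, ⟪∫ u in Set.Iic v, f u ∂ν, f v⟫ ∂ν)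
        - ∫ v, ⟪∫ u in Set.Iic v, g u ∂ρ, f v⟫ ∂ν := by
    rw [← integral_sub hJ1i hJ2i]
    refine integral_congr_ae (Filter.Eventually.of_forall fun v => ?_)
    dsimp only
    rw [real_inner_comm, inner_sub_left]
  have split2 : (∫ v, ⟪g v, (∫ u in Set.Iic v, f u ∂ν) - ∫ u in Set.Iic v, g u ∂ρ⟫ ∂ρ)
      = (∫ v, ⟪∫ u in Set.Iic v, f u ∂ν, g v⟫ ∂ρ)
        - ∫ v, ⟪∫ u in Set.Iic v, g u ∂ρ, g v⟫ ∂ρ := by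
    rw [← integral_sub hJ3i hJ4i]
    refine integral_congr_ae (Filter.Eventually.of_forall fun v => ?_)
    dsimp only
    rw [real_inner_comm, inner_sub_left]
  have P1 : (∫ v, ⟪f v, (∫ u in Set.Iic v, f u ∂ν) - ∫ u in Set.Iic v, g u ∂ρ⟫ ∂ν) ≤ 0 :=
    integral_nonpos_of_ae hsign1
  have P2 : 0 ≤ ∫ v, ⟪g v, (∫ u in Set.Iic v, f u ∂ν) - ∫ u in Set.Iic v, g u ∂ρ⟫ ∂ρ :=
    integral_nonneg_of_ae hsign2
  have E1 := J_add ν ν hf hf hfb hfb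
  have E2 := J_add ν ρ hf hg hfb hgb
  have E3 := J_add ρ ν hg hf hgb hfb
  have E4 := J_add ρ ρ hg hg hgb hgb
  have D1 : (∫ v, (ν {v}).toReal * ⟪f v, f v⟫ ∂ν)
      = ∫ v, (ρ {v}).toReal * ⟪g v, f v⟫ ∂ν := by
    refine integral_congr_ae (Filter.Eventually.of_forall fun v => ?_)
    dsimp only
    calc (ν {v}).toReal * ⟪f v, f v⟫ = ⟪(ν {v}).toReal • f v, f v⟫ :=
          (real_inner_smul_left _ _ _).symm
      _ = ⟪(ρ {v}).toReal • g v, f v⟫ := by rw [hatom v]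
      _ = (ρ {v}).toReal * ⟪g v, f v⟫ := real_inner_smul_left _ _ _
  have D2 : (∫ v, (ν {v}).toReal * ⟪f v, g v⟫ ∂ρ)
      = ∫ v, (ρ {v}).toReal * ⟪g v, g v⟫ ∂ρ := by
    refine integral_congr_ae (Filter.Eventually.of_forall fun v => ?_)
    dsimp only
    calc (ν {v}).toReal * ⟪f v, g v⟫ = ⟪(ν {v}).toReal • f v, g v⟫ :=
          (real_inner_smul_left _ _ _).symm
      _ = ⟪(ρ {v}).toReal • g v, g v⟫ := by rw [hatom v]
      _ = (ρ {v}).toReal * ⟪g v, g v⟫ := real_inner_smul_left _ _ _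
  have expand : ⟪(∫ u, f u ∂ν) - ∫ u, g u ∂ρ, (∫ u, f u ∂ν) - ∫ u, g u ∂ρ⟫
      = ⟪∫ u, f u ∂ν, ∫ u, f u ∂ν⟫ - ⟪∫ u, f u ∂ν, ∫ u, g u ∂ρ⟫
        - ⟪∫ u, g u ∂ρ, ∫ u, f u ∂ν⟫ + ⟪∫ u, g u ∂ρ, ∫ u, g u ∂ρ⟫ :=
    inner_sub_sub_self _ _
  have hAB : ⟪(∫ u, f u ∂ν) - ∫ u, g u ∂ρ, (∫ u, f u ∂ν) - ∫ u, g u ∂ρ⟫ ≤ 0 := by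
    linarith
  exact sub_eq_zero.mp (real_inner_self_nonpos.mp hAB)


lemma halfspace_closure {D : Set E} {w z : E}
    (hD : D ⊆ {y | 0 ≤ ⟪w, y - z⟫}) {p : E} (hp : p ∈ closure D) : 0 ≤ ⟪w, p - z⟫ := by
  have hcl : IsClosed {y : E | 0 ≤ ⟪w, y - z⟫} :=
    isClosed_le continuous_const
      (Continuous.inner continuous_const (continuous_id.sub continuous_const))
  exact closure_minimal hD hcl hp

lemma split_Icc (μ : Measure ℝ) (φ : ℝ → E) {a b : ℝ} (h0 : 0 ≤ a) (hab : a ≤ b)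
    (hint : IntegrableOn φ (Set.Icc 0 b) μ) :
    ∫ r in Set.Icc 0 b, φ r ∂μ
      = (∫ r in Set.Icc 0 a, φ r ∂μ) + ∫ r in Set.Ioc a b, φ r ∂μ := by
  rw [← Set.Icc_union_Ioc_eq_Icc h0 hab]
  exact setIntegral_union ((Set.Iic_disjoint_Ioc le_rfl).mono_left Set.Icc_subset_Iic_self)
    measurableSet_Ioc
    (hint.mono_set (Set.Icc_subset_Icc_right hab))
    (hint.mono_set (fun r hr => ⟨h0.trans hr.1.le, hr.2⟩))

lemma tends_Ioc (μ : Measure ℝ) (φ : ℝ → E) {s : ℝ} (hs : 0 < s)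
    (hint : IntegrableOn φ (Set.Icc 0 s) μ) (un : ℕ → ℝ) (h0 : ∀ n, 0 ≤ un n)
    (hlt : ∀ n, un n < s) (htend : Filter.Tendsto un Filter.atTop (nhds s)) :
    Filter.Tendsto (fun n => ∫ r in Set.Ioc (un n) s, φ r ∂μ) Filter.atTop
      (nhds ((μ {s}).toReal • φ s)) := by
  set m := μ.restrict (Set.Icc 0 s) with hm
  have hIocsub : ∀ n, Set.Ioc (un n) s ⊆ Set.Icc 0 s :=
    fun n r hr => ⟨(h0 n).trans hr.1.le, hr.2⟩
  have key := tendsto_integral_of_dominated_convergence (μ := m)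
    (F := fun n => (Set.Ioc (un n) s).indicator φ)
    (f := (({s} : Set ℝ)).indicator φ) (bound := fun r => ‖φ r‖)
    (fun n => (hint.aestronglyMeasurable).indicator measurableSet_Ioc)
    hint.norm
    (fun n => Filter.Eventually.of_forall fun r => norm_indicator_le_norm_self _ _)
    (Filter.Eventually.of_forall ?_)
  · -- rewrite both sides of key
    have hFn : ∀ n, (∫ r, (Set.Ioc (un n) s).indicator φ r ∂m)
        = ∫ r in Set.Ioc (un n) s, φ r ∂μ := by
      intro n
      rw [integral_indicator measurableSet_Ioc, hm, Measure.restrict_restrict measurableSet_Ioc,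
        Set.inter_eq_self_of_subset_left (hIocsub n)]
    have hfs : (∫ r, (({s} : Set ℝ)).indicator φ r ∂m) = (μ {s}).toReal • φ s := by
      rw [integral_indicator (measurableSet_singleton s), hm,
        Measure.restrict_restrict (measurableSet_singleton s),
        Set.inter_eq_self_of_subset_left
          (Set.singleton_subset_iff.mpr (Set.mem_Icc.mpr ⟨hs.le, le_rfl⟩)),
        sing_int]
    rw [hfs] at key
    exact key.congr hFn
  · -- pointwise convergence
    intro r
    by_cases hr : r = s
    · subst hr
      have hval : ∀ n, (Set.Ioc (un n) r).indicator φ r = φ r :=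
        fun n => Set.indicator_of_mem (Set.mem_Ioc.mpr ⟨hlt n, le_rfl⟩) φ
      rw [Set.indicator_of_mem (Set.mem_singleton r)]
      simp only [hval]
      exact tendsto_const_nhds
    · rw [Set.indicator_of_notMem (by simp [hr] : r ∉ ({s} : Set ℝ))]
      rcases lt_or_gt_of_ne hr with hlt2 | hgt
      · have hev : ∀ᶠ n in Filter.atTop, r < un n := htend (Ioi_mem_nhds hlt2)
        refine Filter.Tendsto.congr' ?_ tendsto_const_nhds
        filter_upwards [hev] with n hn
        exact (Set.indicator_of_notMem (fun hmem => absurd (Set.mem_Ioc.mp hmem).1 (not_lt.mpr hn.le)) φ).symm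
      · have hval : ∀ n, (Set.Ioc (un n) s).indicator φ r = 0 :=
          fun n => Set.indicator_of_notMem (fun hmem => absurd (Set.mem_Ioc.mp hmem).2 (not_le.mpr hgt)) φ
        simp only [hval]
        exact tendsto_const_nhds



lemma gauss_tail_pos (c : ℝ) : gaussianReal 0 1 (Set.Ioi c) ≠ 0 := by
  intro h
  have h2 := (gaussianReal_absolutelyContinuous' 0 one_ne_zero) h
  rw [Real.volume_Ioi] at h2
  exact ENNReal.top_ne_zero h2

lemma gauss_ball_lt_one (c : ℝ) (hc : 0 ≤ c) :
    gaussianReal 0 1 {x : ℝ | |x| ≤ c} < 1 := by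
  have hdisj : Disjoint {x : ℝ | |x| ≤ c} (Set.Ioi c) := by
    rw [Set.disjoint_left]
    intro x hx hx2
    have : |x| > c := lt_of_lt_of_le hx2 (le_abs_self x)
    exact absurd hx (not_le.mpr this)
  have hunion : gaussianReal 0 1 ({x : ℝ | |x| ≤ c} ∪ Set.Ioi c)
      = gaussianReal 0 1 {x : ℝ | |x| ≤ c} + gaussianReal 0 1 (Set.Ioi c) :=
    measure_union hdisj measurableSet_Ioi
  have hle : gaussianReal 0 1 ({x : ℝ | |x| ≤ c} ∪ Set.Ioi c) ≤ 1 := prob_le_one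
  have hne : gaussianReal 0 1 {x : ℝ | |x| ≤ c} ≠ ⊤ :=
    (lt_of_le_of_lt prob_le_one ENNReal.one_lt_top).ne
  calc gaussianReal 0 1 {x : ℝ | |x| ≤ c}
      < gaussianReal 0 1 {x : ℝ | |x| ≤ c} + gaussianReal 0 1 (Set.Ioi c) :=
        ENNReal.lt_add_right hne (gauss_tail_pos c)
    _ = gaussianReal 0 1 ({x : ℝ | |x| ≤ c} ∪ Set.Ioi c) := hunion.symm
    _ ≤ 1 := hle

lemma bm_unbounded {n : ℕ} (hn : 1 ≤ n) {Ω' : Type*} [MeasurableSpace Ω'] (P : Measure Ω')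
    [IsProbabilityMeasure P]
    (W : ℝ → Ω' → EuclideanSpace ℝ (Fin n)) (hW : IsStdBM P W) {c : ℝ} (hc : 0 ≤ c) :
    ∀ᵐ ω ∂P, ∀ m : ℕ, ∃ k : ℕ, m ≤ k ∧ c < ‖W ((k : ℝ) + 1) ω - W (k : ℝ) ω‖ := by
  rw [ae_all_iff]
  intro m
  rw [ae_iff]
  refine measure_mono_null (t := {ω | ∀ k : ℕ, m ≤ k → ‖W ((k : ℝ) + 1) ω - W (k : ℝ) ω‖ ≤ c})
    ?_ ?_
  · intro ω hω
    simp only [Set.mem_setOf_eq, not_exists, not_and, not_lt] at hω ⊢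
    exact hω
  -- independence of increments at integer times starting from m
  set u : ℕ → ℝ := fun j => (m : ℝ) + j with hu
  have humono : Monotone u := fun a b hab => by
    simp only [hu, add_le_add_iff_left, Nat.cast_le]; exact hab
  have hu0 : 0 ≤ u 0 := by simp [hu]
  have hInd := hW.2.2.2.2 u humono hu0
  set Y : ℕ → Ω' → EuclideanSpace ℝ (Fin n) :=
    fun j ω => W (u (j + 1)) ω - W (u j) ω with hY
  have hYmeas : ∀ j, Measurable (Y j) := fun j => (hW.1 _).sub (hW.1 _)
  set v : EuclideanSpace ℝ (Fin n) := EuclideanSpace.single (⟨0, hn⟩ : Fin n) (1 : ℝ) with hv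
  have hvnorm : ‖v‖ = 1 := by
    rw [hv, EuclideanSpace.norm_single]; norm_num
  -- law of inner products
  have hlaw : ∀ j : ℕ, Measure.map (fun ω => (⟪v, Y j ω⟫ : ℝ)) P = gaussianReal 0 1 := by
    intro j
    have h0 : (0 : ℝ) ≤ u j := le_trans (Nat.cast_nonneg m) (by simp [hu])
    have hle : u j ≤ u (j + 1) := humono (Nat.le_succ j)
    have := hW.2.2.2.1 (u j) (u (j + 1)) h0 hle v
    have h1 : u (j + 1) - u j = 1 := by
      simp only [hu]
      push_cast
      ring
    have hvar : Real.toNNReal ((u (j + 1) - u j) * ‖v‖ ^ 2) = 1 := by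
      rw [hvnorm, h1]
      norm_num
    rw [hvar] at this
    exact this
  -- the events
  set B : ℕ → Set Ω' := fun j => (Y j) ⁻¹' {y : EuclideanSpace ℝ (Fin n) | ‖y‖ ≤ c} with hB
  have hBmsSet : MeasurableSet {y : EuclideanSpace ℝ (Fin n) | ‖y‖ ≤ c} :=
    (isClosed_le continuous_norm continuous_const).measurableSet
  have hprod : ∀ N : ℕ, P (⋂ j ∈ Finset.range N, B j) = ∏ j ∈ Finset.range N, P (B j) :=
    fun N => hInd.meas_biInter (fun j _ => ⟨_, hBmsSet, rfl⟩)
  -- each factor bounded by q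
  set q : ENNReal := gaussianReal 0 1 {x : ℝ | |x| ≤ c} with hq
  have hfac : ∀ j : ℕ, P (B j) ≤ q := by
    intro j
    have hsub : B j ⊆ (fun ω => (⟪v, Y j ω⟫ : ℝ)) ⁻¹' {x : ℝ | |x| ≤ c} := by
      intro ω hω
      simp only [hB, Set.mem_preimage, Set.mem_setOf_eq] at hω ⊢
      refine (abs_real_inner_le_norm _ _).trans ?_
      rw [hvnorm, one_mul]; exact hω
    refine (measure_mono hsub).trans ?_
    have hmeas : Measurable fun ω => (⟪v, Y j ω⟫ : ℝ) :=
      Measurable.inner measurable_const (hYmeas j)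
    have hsetm : MeasurableSet {x : ℝ | |x| ≤ c} :=
      (isClosed_le continuous_abs continuous_const).measurableSet
    rw [← Measure.map_apply hmeas hsetm, hlaw j]
  have hqlt : q < 1 := gauss_ball_lt_one c hc
  -- conclude
  have hSsub : ∀ N : ℕ,
      {ω | ∀ k : ℕ, m ≤ k → ‖W ((k : ℝ) + 1) ω - W (k : ℝ) ω‖ ≤ c} ⊆ ⋂ j ∈ Finset.range N, B j := by
    intro N ω hω
    simp only [Set.mem_iInter]
    intro j _
    have hk := hω (m + j) (Nat.le_add_right m j)
    simp only [hB, Set.mem_preimage, Set.mem_setOf_eq, hY]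
    have e1 : u j = ((m + j : ℕ) : ℝ) := by simp only [hu]; push_cast; ring
    have e2 : u (j + 1) = ((m + j : ℕ) : ℝ) + 1 := by simp only [hu]; push_cast; ring
    rw [e1, e2]
    exact hk
  have hbound : ∀ N : ℕ,
      P {ω | ∀ k : ℕ, m ≤ k → ‖W ((k : ℝ) + 1) ω - W (k : ℝ) ω‖ ≤ c} ≤ q ^ N := by
    intro N
    refine (measure_mono (hSsub N)).trans ?_
    rw [hprod N]
    calc ∏ j ∈ Finset.range N, P (B j) ≤ ∏ _j ∈ Finset.range N, q :=
          Finset.prod_le_prod' (fun j _ => hfac j)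
      _ = q ^ N := by rw [Finset.prod_const, Finset.card_range]
  have htend : Tendsto (fun N : ℕ => q ^ N) atTop (nhds 0) :=
    ENNReal.tendsto_pow_atTop_nhds_zero_of_lt_one hqlt
  have := ge_of_tendsto' htend (fun N => hbound N)
  exact le_antisymm this zero_le

end TanakaAux

open TanakaAux

theorem tanaka_pathwise_uniqueness
    {n : ℕ} (hn : 1 ≤ n) (D : Set (EuclideanSpace ℝ (Fin n)))
    (hDb : Bornology.IsBounded D) (hDo : IsOpen D) (hDc : Convex ℝ D)
    {Ω' : Type*} [MeasurableSpace Ω'] (P : Measure Ω') [IsProbabilityMeasure P]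
    (W : ℝ → Ω' → EuclideanSpace ℝ (Fin n)) (hW : IsStdBM P W)
    (x : EuclideanSpace ℝ (Fin n)) (hx : x ∈ closure D)
    (X X' : ℝ → Ω' → EuclideanSpace ℝ (Fin n))
    (μm μm' : Ω' → Measure ℝ) (nv nv' : Ω' → ℝ → EuclideanSpace ℝ (Fin n))
    (hXcont : ∀ᵐ ω ∂P, ContinuousOn (fun t : ℝ => X t ω) (Set.Ici 0) ∧
      ∀ t, 0 ≤ t → X t ω ∈ closure D)
    (hX'cont : ∀ᵐ ω ∂P, ContinuousOn (fun t : ℝ => X' t ω) (Set.Ici 0) ∧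
      ∀ t, 0 ≤ t → X' t ω ∈ closure D)
    (hμm : ∀ ω, (∀ K : Set ℝ, IsCompact K → μm ω K < ⊤) ∧ μm ω (Set.Iio 0) = 0)
    (hμm' : ∀ ω, (∀ K : Set ℝ, IsCompact K → μm' ω K < ⊤) ∧ μm' ω (Set.Iio 0) = 0)
    (hX : ∀ᵐ ω ∂P,
      (∀ t, 0 ≤ t → X t ω = x + W t ω + ∫ s in Set.Icc 0 t, nv ω s ∂(μm ω)) ∧
      μm ω {s | 0 ≤ s ∧ X s ω ∉ frontier D} = 0 ∧
      (∀ᵐ s ∂(μm ω), ‖nv ω s‖ = 1 ∧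
        D ⊆ {y | 0 ≤ (inner ℝ (nv ω s) (y - X s ω) : ℝ)}))
    (hX' : ∀ᵐ ω ∂P,
      (∀ t, 0 ≤ t → X' t ω = x + W t ω + ∫ s in Set.Icc 0 t, nv' ω s ∂(μm' ω)) ∧
      μm' ω {s | 0 ≤ s ∧ X' s ω ∉ frontier D} = 0 ∧
      (∀ᵐ s ∂(μm' ω), ‖nv' ω s‖ = 1 ∧
        D ⊆ {y | 0 ≤ (inner ℝ (nv' ω s) (y - X' s ω) : ℝ)})) :
    ∀ᵐ ω ∂P, ∀ t, 0 ≤ t → X t ω = X' t ω := by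
  classical
  obtain ⟨R0, hR0⟩ := hDb.closure.subset_closedBall 0
  have hDR : closure D ⊆ Metric.closedBall 0 (max R0 0) :=
    hR0.trans (Metric.closedBall_subset_closedBall (le_max_left _ _))
  set R : ℝ := max R0 0 with hRdef
  have hR0' : 0 ≤ R := le_max_right _ _
  set c : ℝ := 2 * R + 2 * ‖x‖ with hcdef
  have hc : 0 ≤ c := by positivity
  have hUnb := bm_unbounded hn P W hW hc
  filter_upwards [hXcont, hX'cont, hX, hX', hUnb] with ω hcX hcX' hEX hEX' hu
  obtain ⟨hXc, hXmem⟩ := hcX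
  obtain ⟨hX'c, hX'mem⟩ := hcX'
  obtain ⟨hXeq, hXcar, hXnor⟩ := hEX
  obtain ⟨hX'eq, hX'car, hX'nor⟩ := hEX'
  -- no eventually-free-Brownian behaviour
  have hno : ∀ T : ℝ, 0 ≤ T → ¬ (∀ t, T ≤ t → x + W t ω ∈ closure D) := by
    intro T hT hcontra
    obtain ⟨k, hk1, hk2⟩ := hu ⌈T⌉₊
    have hkT : T ≤ (k : ℝ) := (Nat.le_ceil T).trans (by exact_mod_cast hk1)
    have hball : ∀ t : ℝ, T ≤ t → ‖x + W t ω‖ ≤ R := by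
      intro t ht
      have := hDR (hcontra t ht)
      rwa [Metric.mem_closedBall, dist_zero_right] at this
    have hb : ‖W ((k : ℝ) + 1) ω - W (k : ℝ) ω‖ ≤ c := by
      have b1 := hball (k : ℝ) hkT
      have b2 := hball ((k : ℝ) + 1) (by linarith)
      have hnx : (0:ℝ) ≤ ‖x‖ := norm_nonneg x
      calc ‖W ((k : ℝ) + 1) ω - W (k : ℝ) ω‖
          = ‖(x + W ((k : ℝ) + 1) ω) - (x + W (k : ℝ) ω)‖ := by congr 1; abel
        _ ≤ ‖x + W ((k : ℝ) + 1) ω‖ + ‖x + W (k : ℝ) ω‖ := norm_sub_le _ _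
        _ ≤ c := by rw [hcdef]; linarith
    exact absurd hb (not_le.mpr hk2)
  -- integrability for all horizons
  have hIntX : ∀ T : ℝ, 0 ≤ T → IntegrableOn (nv ω) (Set.Icc 0 T) (μm ω) := by
    by_contra hcon
    push_neg at hcon
    obtain ⟨T, hT, hTn⟩ := hcon
    refine hno T hT fun t ht => ?_
    have hnt : ¬ IntegrableOn (nv ω) (Set.Icc 0 t) (μm ω) :=
      fun hI => hTn (hI.mono_set (Set.Icc_subset_Icc_right ht))
    have h2 : X t ω = x + W t ω := by
      rw [hXeq t (hT.trans ht), integral_undef hnt, add_zero]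
    rw [← h2]
    exact hXmem t (hT.trans ht)
  have hIntX' : ∀ T : ℝ, 0 ≤ T → IntegrableOn (nv' ω) (Set.Icc 0 T) (μm' ω) := by
    by_contra hcon
    push_neg at hcon
    obtain ⟨T, hT, hTn⟩ := hcon
    refine hno T hT fun t ht => ?_
    have hnt : ¬ IntegrableOn (nv' ω) (Set.Icc 0 t) (μm' ω) :=
      fun hI => hTn (hI.mono_set (Set.Icc_subset_Icc_right ht))
    have h2 : X' t ω = x + W t ω := by
      rw [hX'eq t (hT.trans ht), integral_undef hnt, add_zero]
    rw [← h2]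
    exact hX'mem t (hT.trans ht)
  -- property holder at atoms
  have hQ : ∀ s : ℝ, μm ω {s} ≠ 0 →
      (‖nv ω s‖ = 1 ∧ D ⊆ {y | 0 ≤ (inner ℝ (nv ω s) (y - X s ω) : ℝ)}) := by
    intro s hμs
    by_contra hq
    refine hμs (measure_mono_null ?_ (ae_iff.mp hXnor))
    intro z hz
    simp only [Set.mem_singleton_iff] at hz
    subst hz
    exact hq
  have hQ' : ∀ s : ℝ, μm' ω {s} ≠ 0 →
      (‖nv' ω s‖ = 1 ∧ D ⊆ {y | 0 ≤ (inner ℝ (nv' ω s) (y - X' s ω) : ℝ)}) := by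
    intro s hμs
    by_contra hq
    refine hμs (measure_mono_null ?_ (ae_iff.mp hX'nor))
    intro z hz
    simp only [Set.mem_singleton_iff] at hz
    subst hz
    exact hq
  -- key atom identity
  have hkey : ∀ s : ℝ, 0 ≤ s →
      (μm ω {s}).toReal • nv ω s = (μm' ω {s}).toReal • nv' ω s := by
    intro s hs
    rcases eq_or_lt_of_le hs with hs0 | hspos
    · -- s = 0
      subst hs0
      have hZ0 : X 0 ω - X' 0 ω
          = (μm ω {0}).toReal • nv ω 0 - (μm' ω {0}).toReal • nv' ω 0 := by
        rw [hXeq 0 le_rfl, hX'eq 0 le_rfl, Set.Icc_self, sing_int, sing_int]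
        abel
      have hterm1 : (μm ω {0}).toReal * ⟪nv ω 0, X 0 ω - X' 0 ω⟫ ≤ 0 := by
        rcases eq_or_ne (μm ω {0}) 0 with h | h
        · simp [h]
        · have hQ0 := hQ 0 h
          have hhalf : 0 ≤ ⟪nv ω 0, X' 0 ω - X 0 ω⟫ :=
            halfspace_closure hQ0.2 (hX'mem 0 le_rfl)
          have h2 : ⟪nv ω 0, X 0 ω - X' 0 ω⟫ = -⟪nv ω 0, X' 0 ω - X 0 ω⟫ := by
            rw [← inner_neg_right]
            congr 1
            abel
          refine mul_nonpos_of_nonneg_of_nonpos ENNReal.toReal_nonneg ?_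
          rw [h2]
          linarith
      have hterm2 : 0 ≤ (μm' ω {0}).toReal * ⟪nv' ω 0, X 0 ω - X' 0 ω⟫ := by
        rcases eq_or_ne (μm' ω {0}) 0 with h | h
        · simp [h]
        · have hQ0 := hQ' 0 h
          have hhalf : 0 ≤ ⟪nv' ω 0, X 0 ω - X' 0 ω⟫ :=
            halfspace_closure hQ0.2 (hXmem 0 le_rfl)
          exact mul_nonneg ENNReal.toReal_nonneg hhalf
      have hzz : ⟪X 0 ω - X' 0 ω, X 0 ω - X' 0 ω⟫ ≤ 0 := by
        calc ⟪X 0 ω - X' 0 ω, X 0 ω - X' 0 ω⟫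
            = ⟪(μm ω {0}).toReal • nv ω 0 - (μm' ω {0}).toReal • nv' ω 0,
                X 0 ω - X' 0 ω⟫ := by rw [← hZ0]
          _ = (μm ω {0}).toReal * ⟪nv ω 0, X 0 ω - X' 0 ω⟫
              - (μm' ω {0}).toReal * ⟪nv' ω 0, X 0 ω - X' 0 ω⟫ := by
                rw [inner_sub_left, real_inner_smul_left, real_inner_smul_left]
          _ ≤ 0 := by linarith
      have h00 : X 0 ω - X' 0 ω = 0 := real_inner_self_nonpos.mp hzz
      rw [h00] at hZ0
      exact sub_eq_zero.mp hZ0.symm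
    · -- s > 0 : left limits
      set un : ℕ → ℝ := fun k => s - s / (k + 1) with hundef
      have hun0 : ∀ k : ℕ, 0 ≤ un k := by
        intro k
        have h1 : s / ((k : ℝ) + 1) ≤ s := by
          apply div_le_self hspos.le
          have : (0 : ℝ) ≤ (k : ℝ) := Nat.cast_nonneg k
          linarith
        simp only [hundef]
        linarith
      have hunlt : ∀ k : ℕ, un k < s := by
        intro k
        have h1 : 0 < s / ((k : ℝ) + 1) := by positivity
        simp only [hundef]
        linarith
      have huntend : Tendsto un atTop (nhds s) := by
        have h1 : Tendsto (fun k : ℕ => s / ((k : ℝ) + 1)) atTop (nhds 0) := by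
          apply Tendsto.div_atTop (tendsto_const_nhds (x := s))
          exact tendsto_atTop_add_const_right atTop 1 tendsto_natCast_atTop_atTop
        have h2 := (tendsto_const_nhds (x := s)).sub h1
        rw [sub_zero] at h2
        exact h2
      have hlim1 := tends_Ioc (μm ω) (nv ω) hspos (hIntX s hs) un hun0 hunlt huntend
      have hlim2 := tends_Ioc (μm' ω) (nv' ω) hspos (hIntX' s hs) un hun0 hunlt huntend
      have hdiff : ∀ k : ℕ,
          (∫ r in Set.Ioc (un k) s, nv ω r ∂μm ω)
            - (∫ r in Set.Ioc (un k) s, nv' ω r ∂μm' ω)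
          = (X s ω - X' s ω) - (X (un k) ω - X' (un k) ω) := by
        intro k
        have e1 := split_Icc (μm ω) (nv ω) (hun0 k) (hunlt k).le (hIntX s hs)
        have e2 := split_Icc (μm' ω) (nv' ω) (hun0 k) (hunlt k).le (hIntX' s hs)
        rw [hXeq s hs, hX'eq s hs, hXeq (un k) (hun0 k), hX'eq (un k) (hun0 k), e1, e2]
        abel
      have hXl : Tendsto (fun k => X (un k) ω) atTop (nhds (X s ω)) := by
        have hmem : ∀ k, un k ∈ Set.Ici (0 : ℝ) := fun k => hun0 k
        have h1 : Tendsto un atTop (nhdsWithin s (Set.Ici 0)) :=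
          tendsto_nhdsWithin_of_tendsto_nhds_of_eventually_within un huntend
            (Eventually.of_forall hmem)
        exact ((hXc s hs).tendsto).comp h1
      have hX'l : Tendsto (fun k => X' (un k) ω) atTop (nhds (X' s ω)) := by
        have hmem : ∀ k, un k ∈ Set.Ici (0 : ℝ) := fun k => hun0 k
        have h1 : Tendsto un atTop (nhdsWithin s (Set.Ici 0)) :=
          tendsto_nhdsWithin_of_tendsto_nhds_of_eventually_within un huntend
            (Eventually.of_forall hmem)
        exact ((hX'c s hs).tendsto).comp h1
      have hZtend : Tendsto
          (fun k => (X s ω - X' s ω) - (X (un k) ω - X' (un k) ω)) atTop (nhds 0) := by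
        have := (tendsto_const_nhds (x := X s ω - X' s ω)).sub (hXl.sub hX'l)
        simpa using this
      have hZtend2 : Tendsto
          (fun k => (∫ r in Set.Ioc (un k) s, nv ω r ∂μm ω)
            - (∫ r in Set.Ioc (un k) s, nv' ω r ∂μm' ω)) atTop
          (nhds ((μm ω {s}).toReal • nv ω s - (μm' ω {s}).toReal • nv' ω s)) :=
        hlim1.sub hlim2
      have heq2 := tendsto_nhds_unique ((hZtend2.congr hdiff)) hZtend
      exact sub_eq_zero.mp heq2
  -- main argument for each time T
  intro T hT
  set ν := (μm ω).restrict (Set.Icc 0 T) with hν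
  set ρ := (μm' ω).restrict (Set.Icc 0 T) with hρ
  haveI hνfin : IsFiniteMeasure ν := by
    constructor
    rw [hν, Measure.restrict_apply_univ]
    exact (hμm ω).1 _ isCompact_Icc
  haveI hρfin : IsFiniteMeasure ρ := by
    constructor
    rw [hρ, Measure.restrict_apply_univ]
    exact (hμm' ω).1 _ isCompact_Icc
  have hIT : Integrable (nv ω) ν := hIntX T hT
  have hIT' : Integrable (nv' ω) ρ := hIntX' T hT
  have haeX : AEStronglyMeasurable (nv ω) ν := hIT.aestronglyMeasurable
  have haeX' : AEStronglyMeasurable (nv' ω) ρ := hIT'.aestronglyMeasurable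
  set f0 : ℝ → EuclideanSpace ℝ (Fin n) := haeX.mk (nv ω) with hf0def
  set g0 : ℝ → EuclideanSpace ℝ (Fin n) := haeX'.mk (nv' ω) with hg0def
  have hf0m : StronglyMeasurable f0 := haeX.stronglyMeasurable_mk
  have hg0m : StronglyMeasurable g0 := haeX'.stronglyMeasurable_mk
  have hf0e : nv ω =ᵐ[ν] f0 := haeX.ae_eq_mk
  have hg0e : nv' ω =ᵐ[ρ] g0 := haeX'.ae_eq_mk
  have hmsetf : MeasurableSet {u : ℝ | ‖f0 u‖ ≤ 1} :=
    measurableSet_le hf0m.norm.measurable measurable_const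
  have hmsetg : MeasurableSet {u : ℝ | ‖g0 u‖ ≤ 1} :=
    measurableSet_le hg0m.norm.measurable measurable_const
  set f : ℝ → EuclideanSpace ℝ (Fin n) :=
    Set.piecewise {u : ℝ | ‖f0 u‖ ≤ 1} f0 0 with hfdef
  set g : ℝ → EuclideanSpace ℝ (Fin n) :=
    Set.piecewise {u : ℝ | ‖g0 u‖ ≤ 1} g0 0 with hgdef
  have hfm : StronglyMeasurable f :=
    StronglyMeasurable.piecewise hmsetf hf0m stronglyMeasurable_const
  have hgm : StronglyMeasurable g :=
    StronglyMeasurable.piecewise hmsetg hg0m stronglyMeasurable_const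
  have hfb : ∀ u, ‖f u‖ ≤ 1 := by
    intro u
    by_cases hu : u ∈ {u : ℝ | ‖f0 u‖ ≤ 1}
    · rw [hfdef, Set.piecewise_eq_of_mem _ _ _ hu]; exact hu
    · rw [hfdef, Set.piecewise_eq_of_notMem _ _ _ hu]; simp
  have hgb : ∀ u, ‖g u‖ ≤ 1 := by
    intro u
    by_cases hu : u ∈ {u : ℝ | ‖g0 u‖ ≤ 1}
    · rw [hgdef, Set.piecewise_eq_of_mem _ _ _ hu]; exact hu
    · rw [hgdef, Set.piecewise_eq_of_notMem _ _ _ hu]; simp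
  have hnorXr : ∀ᵐ u ∂ν, ‖nv ω u‖ = 1 ∧
      D ⊆ {y | 0 ≤ (inner ℝ (nv ω u) (y - X u ω) : ℝ)} := ae_restrict_of_ae hXnor
  have hnorX'r : ∀ᵐ u ∂ρ, ‖nv' ω u‖ = 1 ∧
      D ⊆ {y | 0 ≤ (inner ℝ (nv' ω u) (y - X' u ω) : ℝ)} := ae_restrict_of_ae hX'nor
  have hfe : nv ω =ᵐ[ν] f := by
    filter_upwards [hf0e, hnorXr] with u hu1 hu2
    have hule : u ∈ {u : ℝ | ‖f0 u‖ ≤ 1} := by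
      show ‖f0 u‖ ≤ 1
      rw [← hu1, hu2.1]
    rw [hfdef, Set.piecewise_eq_of_mem _ _ _ hule]
    exact hu1
  have hge : nv' ω =ᵐ[ρ] g := by
    filter_upwards [hg0e, hnorX'r] with u hu1 hu2
    have hule : u ∈ {u : ℝ | ‖g0 u‖ ≤ 1} := by
      show ‖g0 u‖ ≤ 1
      rw [← hu1, hu2.1]
    rw [hgdef, Set.piecewise_eq_of_mem _ _ _ hule]
    exact hu1
  -- the "Z" process equality
  have hZeq : ∀ v ∈ Set.Icc (0 : ℝ) T,
      ((∫ u in Set.Iic v, f u ∂ν) - ∫ u in Set.Iic v, g u ∂ρ) = X v ω - X' v ω := by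
    intro v hv
    obtain ⟨hv0, hvT⟩ := Set.mem_Icc.mp hv
    have hres : ν.restrict (Set.Iic v) = (μm ω).restrict (Set.Icc 0 v) := by
      rw [hν, Measure.restrict_restrict measurableSet_Iic]
      congr 1
      ext u
      simp only [Set.mem_inter_iff, Set.mem_Iic, Set.mem_Icc]
      constructor
      · rintro ⟨h1, h2, _⟩; exact ⟨h2, h1⟩
      · rintro ⟨h1, h2⟩; exact ⟨h2, h1, h2.trans hvT⟩
    have hres' : ρ.restrict (Set.Iic v) = (μm' ω).restrict (Set.Icc 0 v) := by
      rw [hρ, Measure.restrict_restrict measurableSet_Iic]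
      congr 1
      ext u
      simp only [Set.mem_inter_iff, Set.mem_Iic, Set.mem_Icc]
      constructor
      · rintro ⟨h1, h2, _⟩; exact ⟨h2, h1⟩
      · rintro ⟨h1, h2⟩; exact ⟨h2, h1, h2.trans hvT⟩
    have h1 : (∫ u in Set.Iic v, f u ∂ν) = ∫ u in Set.Icc 0 v, nv ω u ∂(μm ω) := by
      rw [show (∫ u in Set.Iic v, f u ∂ν) = ∫ u in Set.Iic v, nv ω u ∂ν from
        integral_congr_ae ((hfe.symm).filter_mono (ae_mono Measure.restrict_le_self))]
      rw [show (∫ u in Set.Iic v, nv ω u ∂ν) = ∫ u, nv ω u ∂(ν.restrict (Set.Iic v)) from rfl,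
        hres]
    have h2 : (∫ u in Set.Iic v, g u ∂ρ) = ∫ u in Set.Icc 0 v, nv' ω u ∂(μm' ω) := by
      rw [show (∫ u in Set.Iic v, g u ∂ρ) = ∫ u in Set.Iic v, nv' ω u ∂ρ from
        integral_congr_ae ((hge.symm).filter_mono (ae_mono Measure.restrict_le_self))]
      rw [show (∫ u in Set.Iic v, nv' ω u ∂ρ) = ∫ u, nv' ω u ∂(ρ.restrict (Set.Iic v)) from rfl,
        hres']
    rw [h1, h2, hXeq v hv0, hX'eq v hv0]
    abel
  -- atom condition
  have hatom : ∀ s : ℝ, (ν {s}).toReal • f s = (ρ {s}).toReal • g s := by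
    intro s
    by_cases hs : s ∈ Set.Icc (0 : ℝ) T
    · have hνs : ν {s} = μm ω {s} := by
        rw [hν, Measure.restrict_apply (measurableSet_singleton s),
          Set.inter_eq_self_of_subset_left (Set.singleton_subset_iff.mpr hs)]
      have hρs : ρ {s} = μm' ω {s} := by
        rw [hρ, Measure.restrict_apply (measurableSet_singleton s),
          Set.inter_eq_self_of_subset_left (Set.singleton_subset_iff.mpr hs)]
      have h1 : (ν {s}).toReal • f s = (ν {s}).toReal • nv ω s := by
        rw [← sing_int ν f s, ← sing_int ν (nv ω) s]
        exact integral_congr_ae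
          ((hfe.symm).filter_mono (ae_mono Measure.restrict_le_self))
      have h2 : (ρ {s}).toReal • g s = (ρ {s}).toReal • nv' ω s := by
        rw [← sing_int ρ g s, ← sing_int ρ (nv' ω) s]
        exact integral_congr_ae
          ((hge.symm).filter_mono (ae_mono Measure.restrict_le_self))
      rw [h1, h2, hνs, hρs]
      exact hkey s (Set.mem_Icc.mp hs).1
    · have hνs : ν {s} = 0 := by
        rw [hν, Measure.restrict_apply (measurableSet_singleton s),
          Set.singleton_inter_eq_empty.mpr hs, measure_empty]
      have hρs : ρ {s} = 0 := by
        rw [hρ, Measure.restrict_apply (measurableSet_singleton s),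
          Set.singleton_inter_eq_empty.mpr hs, measure_empty]
      rw [hνs, hρs]
      simp
  -- sign conditions
  have hsign1 : ∀ᵐ v ∂ν,
      ⟪f v, (∫ u in Set.Iic v, f u ∂ν) - ∫ u in Set.Iic v, g u ∂ρ⟫ ≤ 0 := by
    filter_upwards [ae_restrict_mem measurableSet_Icc, hnorXr, hfe] with v hv hQv hfv
    rw [hZeq v hv, ← hfv]
    have hhalf : 0 ≤ ⟪nv ω v, X' v ω - X v ω⟫ :=
      halfspace_closure hQv.2 (hX'mem v (Set.mem_Icc.mp hv).1)
    have h2 : ⟪nv ω v, X v ω - X' v ω⟫ = -⟪nv ω v, X' v ω - X v ω⟫ := by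
      rw [← inner_neg_right]
      congr 1
      abel
    rw [h2]
    linarith
  have hsign2 : ∀ᵐ v ∂ρ,
      0 ≤ ⟪g v, (∫ u in Set.Iic v, f u ∂ν) - ∫ u in Set.Iic v, g u ∂ρ⟫ := by
    filter_upwards [ae_restrict_mem measurableSet_Icc, hnorX'r, hge] with v hv hQv hgv
    rw [hZeq v hv, ← hgv]
    exact halfspace_closure hQv.2 (hXmem v (Set.mem_Icc.mp hv).1)
  have hcore := core_ineq ν ρ hfm hgm hfb hgb hatom hsign1 hsign2
  have hfinal : (∫ u in Set.Icc 0 T, nv ω u ∂(μm ω)) = ∫ u in Set.Icc 0 T, nv' ω u ∂(μm' ω) := by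
    calc (∫ u in Set.Icc 0 T, nv ω u ∂(μm ω)) = ∫ u, nv ω u ∂ν := by rw [hν]
      _ = ∫ u, f u ∂ν := integral_congr_ae hfe
      _ = ∫ u, g u ∂ρ := hcore
      _ = ∫ u, nv' ω u ∂ρ := (integral_congr_ae hge).symm
      _ = ∫ u in Set.Icc 0 T, nv' ω u ∂(μm' ω) := by rw [hρ]
  rw [hXeq T hT, hX'eq T hT, hfinal]
end

section
/- For every d > 0, t > 0, and k ∈ [−d,d], F_d(t,k) ≤ F_d(t,0); equivalently, sup_{k ∈ [−d,d]} F_d(t,k) = F_d(t,0). -/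
open MeasureTheory ProbabilityTheory Real

private lemma summable_of_geom {f : ℕ → ℝ} (C r : ℝ) (hr0 : 0 ≤ r) (hr : r < 1)
    (h : ∀ n, |f n| ≤ C * r ^ n) : Summable f := by
  have hg : Summable fun n : ℕ => C * r ^ n :=
    (summable_geometric_of_lt_one hr0 hr).mul_left C
  exact summable_abs_iff.mp (hg.of_nonneg_of_le (fun n => abs_nonneg _) h)

/-- Summability of Gaussian terms along an affine sequence with slope of modulus ≥ 1. -/
private lemma summable_gauss_aff (β p q : ℝ) (hβ : 0 < β) (hq : 1 ≤ |q|) :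
    Summable fun n : ℕ => exp (-β * (p + q * n) ^ 2) := by
  apply summable_of_geom (exp (β * (|p| + 1))) (exp (-β)) (exp_nonneg _)
    (exp_lt_one_iff.mpr (by linarith))
  intro n
  rw [← Real.exp_nat_mul, ← Real.exp_add, abs_of_nonneg (exp_nonneg _), Real.exp_le_exp]
  have hqn : (1:ℝ) * n ≤ |q| * n := mul_le_mul_of_nonneg_right hq (Nat.cast_nonneg n)
  have key : (n : ℝ) - |p| - 1 ≤ (p + q * n) ^ 2 := by
    rcases le_or_gt ((n : ℝ)) (|p| + 1) with hn | hn
    · nlinarith [sq_nonneg (p + q * n)]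
    · have h1 : |q| * n - |p| ≤ |p + q * n| := by
        have h := abs_sub_abs_le_abs_sub (q * n) (-p)
        rw [abs_mul, Nat.abs_cast, abs_neg, sub_neg_eq_add] at h
        calc |q| * n - |p| ≤ |q * ↑n + p| := h
          _ = |p + q * n| := by rw [add_comm]
      have h2 : (1:ℝ) ≤ |q| * n - |p| := by nlinarith
      have h4 : (|q| * n - |p|) ^ 2 ≤ (p + q * n) ^ 2 := by
        rw [← sq_abs (p + q * n)]
        exact pow_le_pow_left₀ (by linarith) h1 2
      nlinarith [sq_nonneg (|q| * (n:ℝ) - |p| - 1)]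
  nlinarith [key]

/-- ℤ-indexed Gaussian summability. -/
private lemma summable_gauss_int (β u : ℝ) (hβ : 0 < β) :
    Summable fun k : ℤ => exp (-β * (u - k) ^ 2) := by
  apply Summable.of_nat_of_neg
  · apply (summable_gauss_aff β u (-1) hβ (by norm_num)).congr
    intro n; congr 1; push_cast; ring
  · apply (summable_gauss_aff β u 1 hβ (by norm_num)).congr
    intro n; congr 1; push_cast; ring

private lemma summable_thetaterm (a w : ℝ) (ha : 0 < a) :
    Summable fun m : ℤ => exp (-a * (m:ℝ) ^ 2) * Real.cos ((m:ℝ) * w) := by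
  apply summable_abs_iff.mp
  have hb : Summable fun k : ℤ => exp (-a * (k:ℝ)^2) := by
    apply (summable_gauss_int a 0 ha).congr
    intro k; congr 1; ring
  apply Summable.of_nonneg_of_le (fun _ => abs_nonneg _) _ hb
  intro k
  rw [abs_mul, abs_of_nonneg (exp_nonneg _)]
  calc exp (-a * (k:ℝ)^2) * |Real.cos ((k:ℝ) * w)| ≤ exp (-a * (k:ℝ)^2) * 1 :=
        mul_le_mul_of_nonneg_left (Real.abs_cos_le_one _) (exp_nonneg _)
  _ = exp (-a * (k:ℝ)^2) := mul_one _

/-- Core pairing inequality on the Gaussian side. -/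
private lemma core_pair (α a b : ℝ) (hα : 2 ≤ α) (ha : 0 ≤ a) (hab : a ≤ b) (hsum : 1 ≤ a + b) :
    exp (-α * (a+1)^2) + exp (-α * b^2) ≤ exp (-α * a^2) + exp (-α * (b+1)^2) := by
  have hα0 : (0:ℝ) < α := by linarith
  set X : ℝ := α * (b^2 - a^2) with hX
  have hX0 : 0 ≤ X := by
    have := mul_nonneg (sub_nonneg.mpr hab) (by linarith : (0:ℝ) ≤ a + b)
    nlinarith
  set z : ℝ := exp (-X) with hz
  have hz1 : z ≤ 1 := exp_le_one_iff.mpr (by linarith)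
  have hz0 : 0 < z := exp_pos _
  have e2 : exp (-α * b^2) = exp (-α * a^2) * z := by
    rw [hz, ← Real.exp_add]; congr 1; ring
  have e1 : exp (-α * (b+1)^2) = exp (-α * (a+1)^2) * exp (-(α * ((b+1)^2 - (a+1)^2))) := by
    rw [← Real.exp_add]; congr 1; ring
  have e3 : z^3 ≤ exp (-(α * ((b+1)^2 - (a+1)^2))) := by
    rw [hz, ← Real.exp_nat_mul]
    apply Real.exp_le_exp.mpr
    push_cast
    nlinarith [mul_nonneg (mul_nonneg hα0.le (sub_nonneg.mpr hab)) (sub_nonneg.mpr hsum)]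
  have e5 : 3 * exp (-α * (a+1)^2) ≤ exp (-α * a^2) := by
    have : exp (-α * a^2) = exp (-α * (a+1)^2) * exp (α * (2*a+1)) := by
      rw [← Real.exp_add]; congr 1; ring
    rw [this]
    have h3 : (3:ℝ) ≤ exp (α * (2*a+1)) := by
      have := Real.add_one_le_exp (α * (2*a+1))
      nlinarith
    nlinarith [exp_pos (-α * (a+1)^2)]
  -- final chain
  rw [e1, e2]
  have hp : (0:ℝ) < exp (-α * (a+1)^2) := exp_pos _
  have step1 : exp (-α * (a+1)^2) * (1 - exp (-(α * ((b+1)^2 - (a+1)^2))))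
      ≤ exp (-α * (a+1)^2) * (1 - z^3) := by
    apply mul_le_mul_of_nonneg_left _ hp.le
    linarith [e3]
  have step2 : exp (-α * (a+1)^2) * (1 - z^3) ≤ 3 * exp (-α * (a+1)^2) * (1 - z) := by
    have : (1 - z^3) ≤ 3 * (1 - z) := by
      nlinarith [mul_nonneg (mul_nonneg (sub_nonneg.mpr hz1) (sub_nonneg.mpr hz1))
        (by linarith : (0:ℝ) ≤ 2 + z)]
    nlinarith
  have step3 : 3 * exp (-α * (a+1)^2) * (1 - z) ≤ exp (-α * a^2) * (1 - z) :=
    mul_le_mul_of_nonneg_right e5 (by linarith)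
  nlinarith [step1, step2, step3]

private lemma hasSum_int_even_add_odd {f : ℤ → ℝ} {a b : ℝ}
    (he : HasSum (fun k : ℤ => f (2 * k)) a)
    (ho : HasSum (fun k : ℤ => f (2 * k + 1)) b) : HasSum f (a + b) := by
  have hi : Function.Injective fun k : ℤ => 2 * k := fun x y h => by simp only at h; omega
  have hi' : Function.Injective fun k : ℤ => 2 * k + 1 := fun x y h => by simp only at h; omega
  refine (hi.hasSum_range_iff.2 he).add_isCompl ?_ (hi'.hasSum_range_iff.2 ho)
  constructor
  · rw [disjoint_iff_inf_le]
    rintro x ⟨⟨i, rfl⟩, ⟨j, hj⟩⟩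
    simp only at hj
    omega
  · rw [codisjoint_iff_le_sup]
    rintro x -
    rcases Int.even_or_odd x with ⟨i, hi2⟩ | ⟨i, hi2⟩
    · exact Set.mem_union_left _ ⟨i, by simp; omega⟩
    · exact Set.mem_union_right _ ⟨i, by simp; omega⟩

private lemma tsum_int_even_odd {f : ℤ → ℝ}
    (h1 : Summable fun m : ℤ => f (2 * m)) (h2 : Summable fun m : ℤ => f (2 * m + 1)) :
    ∑' m : ℤ, f m = (∑' m : ℤ, f (2 * m)) + ∑' m : ℤ, f (2 * m + 1) :=
  (hasSum_int_even_add_odd h1.hasSum h2.hasSum).tsum_eq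

/-- Poisson summation for the theta function with a phase. -/
private lemma poisson (a : ℝ) (ha : 0 < a) (w : ℝ) :
    ∑' m : ℤ, exp (-a * (m:ℝ) ^ 2) * Real.cos ((m:ℝ) * w)
      = Real.sqrt (π / a) * ∑' k : ℤ, exp (-(π^2/a) * ((k:ℝ) - w/(2*π)) ^ 2) := by
  have hπ : (0:ℝ) < π := Real.pi_pos
  have hπc : (π:ℂ) ≠ 0 := Complex.ofReal_ne_zero.mpr (ne_of_gt hπ)
  have hac : ((a:ℝ):ℂ) ≠ 0 := Complex.ofReal_ne_zero.mpr (ne_of_gt ha)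
  have ha' : (0:ℝ) < a / π := div_pos ha hπ
  have H := Complex.tsum_exp_neg_quadratic (a := ((a / π : ℝ) : ℂ))
      (by rwa [Complex.ofReal_re]) (Complex.I * w / (2 * π))
  -- rewrite LHS terms of H
  have hL : ∀ m : ℤ, Complex.exp (-(π:ℂ) * ((a/π : ℝ):ℂ) * (m:ℂ)^2
        + 2 * (π:ℂ) * (Complex.I * (w:ℂ) / (2 * (π:ℂ))) * (m:ℂ))
      = Complex.exp (((-a * (m:ℝ)^2 : ℝ) : ℂ) + ((((m:ℝ) * w : ℝ)):ℂ) * Complex.I) := by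
    intro m
    congr 1
    push_cast
    field_simp
  -- rewrite RHS terms of H
  have hR : ∀ n : ℤ, Complex.exp (-(π:ℂ) / ((a/π : ℝ):ℂ)
        * ((n:ℂ) + Complex.I * (Complex.I * (w:ℂ) / (2 * (π:ℂ))))^2)
      = ((exp (-(π^2/a) * ((n:ℝ) - w/(2*π))^2) : ℝ) : ℂ) := by
    intro n
    rw [Complex.ofReal_exp]
    congr 1
    have hii : Complex.I * (Complex.I * (w:ℂ) / (2 * (π:ℂ))) = -((w:ℂ) / (2 * (π:ℂ))) := by
      rw [← mul_div_assoc, ← mul_assoc, Complex.I_mul_I]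
      ring
    rw [hii]
    push_cast
    field_simp
    ring
  rw [funext hL, funext hR] at H
  have hsumL : Summable fun m : ℤ =>
      Complex.exp (((-a * (m:ℝ)^2 : ℝ) : ℂ) + ((((m:ℝ) * w : ℝ)):ℂ) * Complex.I) := by
    apply Summable.of_norm
    have hb : Summable fun m : ℤ => exp (-a * (m:ℝ)^2) := by
      apply (summable_gauss_int a 0 ha).congr
      intro k; congr 1; ring
    apply hb.congr
    intro m
    have hz : (((-a * (m:ℝ)^2 : ℝ) : ℂ) + ((((m:ℝ) * w : ℝ)):ℂ) * Complex.I).re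
        = -a * (m:ℝ)^2 := by
      simp only [Complex.add_re, Complex.ofReal_re, Complex.mul_re, Complex.ofReal_im,
        Complex.I_re, Complex.I_im, mul_zero, mul_one, zero_mul, sub_zero, add_zero,
        zero_sub, neg_zero, zero_add]
    rw [Complex.norm_exp, hz]
  have hre : (∑' m : ℤ, Complex.exp (((-a * (m:ℝ)^2 : ℝ) : ℂ)
      + ((((m:ℝ) * w : ℝ)):ℂ) * Complex.I)).re
      = ∑' m : ℤ, exp (-a * (m:ℝ)^2) * Real.cos ((m:ℝ) * w) := by
    rw [Complex.re_tsum hsumL]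
    apply tsum_congr
    intro m
    have h1 : (((-a * (m:ℝ)^2 : ℝ) : ℂ) + ((((m:ℝ) * w : ℝ)):ℂ) * Complex.I).re
        = -a * (m:ℝ)^2 := by
      simp only [Complex.add_re, Complex.ofReal_re, Complex.mul_re, Complex.ofReal_im,
        Complex.I_re, Complex.I_im, mul_zero, mul_one, zero_mul, sub_zero, add_zero,
        zero_sub, neg_zero, zero_add]
    have h2 : (((-a * (m:ℝ)^2 : ℝ) : ℂ) + ((((m:ℝ) * w : ℝ)):ℂ) * Complex.I).im
        = (m:ℝ) * w := by
      simp only [Complex.add_im, Complex.ofReal_im, Complex.mul_im, Complex.ofReal_re,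
        Complex.I_re, Complex.I_im, mul_zero, mul_one, zero_mul, sub_zero, add_zero,
        zero_sub, neg_zero, zero_add]
    rw [Complex.exp_re, h1, h2]
  have hcoef : 1 / ((a/π : ℝ):ℂ) ^ (1/2 : ℂ) = ((Real.sqrt (π/a) : ℝ) : ℂ) := by
    have h12 : ((1/2 : ℝ) : ℂ) = (1/2 : ℂ) := by norm_num
    rw [← h12, ← Complex.ofReal_cpow ha'.le, ← Complex.ofReal_one, ← Complex.ofReal_div]
    congr 1
    rw [← Real.sqrt_eq_rpow, one_div, ← Real.sqrt_inv, inv_div]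
  have hR2 : (1 / ((a/π : ℝ):ℂ) ^ (1/2 : ℂ)
        * ∑' n : ℤ, ((exp (-(π^2/a) * ((n:ℝ) - w/(2*π))^2) : ℝ) : ℂ)).re
      = Real.sqrt (π/a) * ∑' k : ℤ, exp (-(π^2/a) * ((k:ℝ) - w/(2*π))^2) := by
    rw [← Complex.ofReal_tsum, hcoef, ← Complex.ofReal_mul, Complex.ofReal_re]
  rw [← hre, H]
  exact hR2
private lemma gauss_sum_le (α u : ℝ) (hα : 2 ≤ α) (hu : 1/2 ≤ u) (hu1 : u ≤ 1) :
    ∑' k : ℤ, exp (-α * (u - 2*(k:ℝ))^2) ≤ ∑' k : ℤ, exp (-α * (u - (2*(k:ℝ)+1))^2) := by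
  have hα0 : (0:ℝ) < α := by linarith
  set p : ℤ → ℝ := fun k => exp (-α * (u - 2*(k:ℝ))^2) with hp_def
  set q : ℤ → ℝ := fun k => exp (-α * (u - (2*(k:ℝ)+1))^2) with hq_def
  have sp1 : Summable fun n : ℕ => p ((n:ℤ) + 1) := by
    apply (summable_gauss_aff α (u - 2) (-2) hα0 (by norm_num)).congr
    intro n; simp only [hp_def]; congr 1; push_cast; ring
  have sp2' : Summable fun n : ℕ => p (-((n:ℤ) + 1)) := by
    apply (summable_gauss_aff α (u + 2) 2 hα0 (by norm_num)).congr
    intro n; simp only [hp_def]; congr 1; push_cast; ring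
  have sp2 : Summable fun n : ℕ => p (-(n:ℤ)) := by
    apply (summable_gauss_aff α u 2 hα0 (by norm_num)).congr
    intro n; simp only [hp_def]; congr 1; push_cast; ring
  have sq1 : Summable fun n : ℕ => q (n:ℤ) := by
    apply (summable_gauss_aff α (u - 1) (-2) hα0 (by norm_num)).congr
    intro n; simp only [hq_def]; congr 1; push_cast; ring
  have sq2 : Summable fun n : ℕ => q (-((n:ℤ) + 1)) := by
    apply (summable_gauss_aff α (u + 1) 2 hα0 (by norm_num)).congr
    intro n; simp only [hq_def]; congr 1; push_cast; ring
  have hp : ∑' k : ℤ, p k = ∑' n : ℕ, (p ((n:ℤ) + 1) + p (-(n:ℤ))) := by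
    have h1 : ∑' k : ℤ, p k
        = (∑' n : ℕ, p ((n:ℤ) + 1)) + p 0 + ∑' n : ℕ, p (-((n:ℤ) + 1)) :=
      tsum_of_add_one_of_neg_add_one sp1 sp2'
    have h2 : ∑' n : ℕ, p (-(n:ℤ)) = p 0 + ∑' n : ℕ, p (-((n:ℤ) + 1)) := by
      rw [sp2.tsum_eq_zero_add]
      norm_num
    rw [sp1.tsum_add sp2, h2, h1]
    ring
  have hq : ∑' k : ℤ, q k = ∑' n : ℕ, (q (n:ℤ) + q (-((n:ℤ) + 1))) := by
    rw [tsum_of_nat_of_neg_add_one sq1 sq2, sq1.tsum_add sq2]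
  rw [hp, hq]
  apply Summable.tsum_le_tsum _ (sp1.add sp2) (sq1.add sq2)
  intro n
  have key := core_pair α (2*(n:ℝ) + 1 - u) (2*(n:ℝ) + u) hα
    (by linarith [Nat.cast_nonneg (α := ℝ) n]) (by linarith)
    (by nlinarith [Nat.cast_nonneg (α := ℝ) n])
  have e1 : p ((n:ℤ) + 1) = exp (-α * ((2*(n:ℝ) + 1 - u) + 1)^2) := by
    simp only [hp_def]; congr 1; push_cast; ring
  have e2 : p (-(n:ℤ)) = exp (-α * (2*(n:ℝ) + u)^2) := by
    simp only [hp_def]; congr 1; push_cast; ring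
  have e3 : q (n:ℤ) = exp (-α * (2*(n:ℝ) + 1 - u)^2) := by
    simp only [hq_def]; congr 1; push_cast; ring
  have e4 : q (-((n:ℤ) + 1)) = exp (-α * ((2*(n:ℝ) + u) + 1)^2) := by
    simp only [hq_def]; congr 1; push_cast; ring
  rw [e1, e2, e3, e4]
  linarith [key]
set_option maxHeartbeats 1000000 in
/-- For small `c` and `z ∈ [π/2, π]`, the theta sum at scale `c` is dominated by the
one at scale `4c` (via Poisson summation and the Gaussian comparison). -/
private lemma theta_le (c z : ℝ) (hc : 0 < c) (hc4 : c ≤ 1/4) (hz : π/2 ≤ z) (hz1 : z ≤ π) :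
    ∑' m : ℤ, exp (-c * (m:ℝ)^2) * Real.cos ((m:ℝ) * z)
      ≤ ∑' m : ℤ, exp (-(4*c) * (m:ℝ)^2) * Real.cos ((m:ℝ) * (2*z)) := by
  have hπ : (0:ℝ) < π := Real.pi_pos
  have hπ3 : (3:ℝ) < π := Real.pi_gt_three
  have hπne : π ≠ 0 := ne_of_gt hπ
  have hcne : c ≠ 0 := ne_of_gt hc
  obtain ⟨α, hα_def⟩ : ∃ α : ℝ, α = π^2 / (4*c) := ⟨_, rfl⟩
  obtain ⟨u, hu_def⟩ : ∃ u : ℝ, u = z / π := ⟨_, rfl⟩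
  have hα : 2 ≤ α := by
    rw [hα_def, le_div_iff₀ (by linarith)]
    nlinarith
  have hu : 1/2 ≤ u := by
    rw [hu_def, le_div_iff₀ hπ]
    linarith
  have hu1 : u ≤ 1 := by
    rw [hu_def, div_le_one hπ]
    linarith
  have hA : ∑' m : ℤ, exp (-c * (m:ℝ)^2) * Real.cos ((m:ℝ) * z)
      = Real.sqrt (π/c) * ∑' k : ℤ, exp (-α * (u - 2*(k:ℝ))^2) := by
    rw [poisson c hc z]
    congr 1
    apply tsum_congr
    intro k
    congr 1
    rw [hα_def, hu_def]
    field_simp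
    ring
  have hB : ∑' m : ℤ, exp (-(4*c) * (m:ℝ)^2) * Real.cos ((m:ℝ) * (2*z))
      = (Real.sqrt (π/c) / 2) * ∑' k : ℤ, exp (-α * (u - (k:ℝ))^2) := by
    rw [poisson (4*c) (by linarith) (2*z)]
    congr 1
    · rw [show π/(4*c) = (π/c)/4 by ring, Real.sqrt_div (by positivity) 4,
        show Real.sqrt 4 = 2 by rw [show (4:ℝ) = 2^2 by norm_num, Real.sqrt_sq (by norm_num)]]
    · apply tsum_congr
      intro k
      congr 1
      rw [hα_def, hu_def]
      field_simp
      ring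
  have hsplit : ∑' k : ℤ, exp (-α * (u - (k:ℝ))^2)
      = (∑' k : ℤ, exp (-α * (u - 2*(k:ℝ))^2))
        + ∑' k : ℤ, exp (-α * (u - (2*(k:ℝ)+1))^2) := by
    have hα0 : (0:ℝ) < α := by linarith
    have he : Summable fun k : ℤ => exp (-α * (u - 2*(k:ℝ))^2) := by
      apply (summable_gauss_int (4*α) (u/2) (by linarith)).congr
      intro k; congr 1; ring
    have ho : Summable fun k : ℤ => exp (-α * (u - (2*(k:ℝ)+1))^2) := by
      apply (summable_gauss_int (4*α) ((u-1)/2) (by linarith)).congr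
      intro k; congr 1; ring
    have he2 : Summable fun m : ℤ => exp (-α * (u - ((2*m : ℤ):ℝ))^2) := by
      apply he.congr; intro k; push_cast; ring_nf
    have ho2 : Summable fun m : ℤ => exp (-α * (u - ((2*m+1 : ℤ):ℝ))^2) := by
      apply ho.congr; intro k; push_cast; ring_nf
    have key := tsum_int_even_odd (f := fun k : ℤ => exp (-α * (u - (k:ℝ))^2)) he2 ho2
    rw [key]
    congr 1
    · apply tsum_congr; intro k; push_cast; ring_nf
    · apply tsum_congr; intro k; push_cast; ring_nf
  have hPQ := gauss_sum_le α u hα hu hu1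
  have hs : 0 ≤ Real.sqrt (π/c) := Real.sqrt_nonneg _
  rw [hA, hB, hsplit]
  nlinarith [hPQ, hs]
private lemma abs_sin_nat_mul (m : ℕ) (y : ℝ) (hy : 0 ≤ Real.sin y) :
    |Real.sin ((m:ℝ) * y)| ≤ (m:ℝ) * Real.sin y := by
  induction m with
  | zero => simp
  | succ k ih =>
    have h : ((k:ℝ) + 1) * y = (k:ℝ) * y + y := by ring
    push_cast
    rw [h, Real.sin_add]
    calc |Real.sin ((k:ℝ)*y) * Real.cos y + Real.cos ((k:ℝ)*y) * Real.sin y|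
        ≤ |Real.sin ((k:ℝ)*y) * Real.cos y| + |Real.cos ((k:ℝ)*y) * Real.sin y| := abs_add_le _ _
      _ = |Real.sin ((k:ℝ)*y)| * |Real.cos y| + |Real.cos ((k:ℝ)*y)| * Real.sin y := by
          rw [abs_mul, abs_mul, abs_of_nonneg hy]
      _ ≤ (k:ℝ) * Real.sin y * 1 + 1 * Real.sin y := by
          apply add_le_add
          · exact mul_le_mul ih (Real.abs_cos_le_one y) (abs_nonneg _)
              (by positivity)
          · exact mul_le_mul_of_nonneg_right (Real.abs_cos_le_one _) hy
      _ = ((k:ℝ) + 1) * Real.sin y := by ring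

private lemma summable_S (c y : ℝ) (hc : 0 < c) :
    Summable fun n : ℕ =>
      (-1:ℝ)^n * exp (-c * (2*(n:ℝ)+1)^2) * Real.sin ((2*(n:ℝ)+1)*y) := by
  apply summable_of_geom (exp (-c)) (exp (-4*c)) (exp_nonneg _)
    (exp_lt_one_iff.mpr (by linarith))
  intro n
  rw [← Real.exp_nat_mul, ← Real.exp_add]
  have h1 : |(-1:ℝ)^n * exp (-c * (2*(n:ℝ)+1)^2) * Real.sin ((2*(n:ℝ)+1)*y)|
      ≤ exp (-c * (2*(n:ℝ)+1)^2) := by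
    rw [abs_mul, abs_mul, abs_pow, abs_neg, abs_one, one_pow, one_mul,
      abs_of_nonneg (exp_nonneg _)]
    calc exp (-c * (2*(n:ℝ)+1)^2) * |Real.sin ((2*(n:ℝ)+1)*y)|
        ≤ exp (-c * (2*(n:ℝ)+1)^2) * 1 :=
          mul_le_mul_of_nonneg_left (Real.abs_sin_le_one _) (exp_nonneg _)
      _ = _ := mul_one _
  refine h1.trans (Real.exp_le_exp.mpr ?_)
  nlinarith [Nat.cast_nonneg (α := ℝ) n, sq_nonneg ((n:ℝ))]

private lemma two_add_three_le (n : ℕ) : (2*(n:ℝ) + 3) ≤ 3^(n+1) := by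
  induction n with
  | zero => norm_num
  | succ k ih =>
    have h3 : (3:ℝ)^(k+2) = 3 * 3^(k+1) := by ring
    push_cast at ih ⊢
    rw [h3]
    nlinarith [pow_nonneg (by norm_num : (0:ℝ) ≤ 3) (k+1)]

/-- Series-side positivity for `c ≥ 1/4`. -/
private lemma S_nonneg_big (c y : ℝ) (hc : 1/4 ≤ c) (hy : 0 ≤ Real.sin y) :
    0 ≤ ∑' n : ℕ, (-1:ℝ)^n * exp (-c * (2*(n:ℝ)+1)^2) * Real.sin ((2*(n:ℝ)+1)*y) := by
  have hc0 : (0:ℝ) < c := by linarith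
  have hS := summable_S c y hc0
  obtain ⟨r, hr_def⟩ : ∃ r : ℝ, r = 3 * exp (-8*c) := ⟨_, rfl⟩
  have hr0 : 0 ≤ r := by rw [hr_def]; positivity
  have hexp2 : (6:ℝ) < exp 2 := by
    have h1 := Real.exp_one_gt_d9
    have h2 : exp 2 = exp 1 * exp 1 := by rw [← Real.exp_add]; norm_num
    nlinarith
  have hr : r < 1/2 := by
    rw [hr_def]
    have h1 : exp (-8*c) ≤ exp (-2) := Real.exp_le_exp.mpr (by linarith)
    have h2 : exp (-2) = (exp 2)⁻¹ := by rw [← Real.exp_neg]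
    have h3 : (exp 2)⁻¹ < 1/6 := by
      rw [inv_lt_comm₀ (by positivity) (by norm_num)]
      simpa using hexp2
    nlinarith
  have hbound : ∀ n : ℕ,
      -(exp (-c) * Real.sin y * r^(n+1))
        ≤ (-1:ℝ)^(n+1) * exp (-c * (2*((n:ℝ)+1)+1)^2) * Real.sin ((2*((n:ℝ)+1)+1)*y) := by
    intro n
    have habs : |(-1:ℝ)^(n+1) * exp (-c * (2*((n:ℝ)+1)+1)^2) * Real.sin ((2*((n:ℝ)+1)+1)*y)|
        ≤ exp (-c * (2*((n:ℝ)+1)+1)^2) * ((2*(n:ℝ)+3) * Real.sin y) := by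
      rw [abs_mul, abs_mul, abs_pow, abs_neg, abs_one, one_pow, one_mul,
        abs_of_nonneg (exp_nonneg _)]
      apply mul_le_mul_of_nonneg_left _ (exp_nonneg _)
      have := abs_sin_nat_mul (2*n+3) y hy
      push_cast at this
      calc |Real.sin ((2*((n:ℝ)+1)+1)*y)| = |Real.sin ((2*(n:ℝ)+3)*y)| := by
            rw [show (2*((n:ℝ)+1)+1) = (2*(n:ℝ)+3) by ring]
        _ ≤ (2*(n:ℝ)+3) * Real.sin y := by convert this using 3 <;> push_cast <;> ring
    have hEB : exp (-c * (2*((n:ℝ)+1)+1)^2) * (2*(n:ℝ)+3) ≤ exp (-c) * r^(n+1) := by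
      have hrr : exp (-c) * (3 * exp (-8*c))^(n+1) = 3^(n+1) * exp (-c + (n+1) * (-8*c)) := by
        rw [mul_pow, ← Real.exp_nat_mul, Real.exp_add]
        push_cast
        ring
      rw [hr_def, hrr]
      have hq : exp (-c * (2*((n:ℝ)+1)+1)^2) ≤ exp (-c + (n+1) * (-8*c)) := by
        apply Real.exp_le_exp.mpr
        push_cast
        nlinarith [Nat.cast_nonneg (α := ℝ) n, sq_nonneg ((n:ℝ))]
      calc exp (-c * (2*((n:ℝ)+1)+1)^2) * (2*(n:ℝ)+3)
          ≤ exp (-c + (n+1) * (-8*c)) * 3^(n+1) := by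
            apply mul_le_mul hq (two_add_three_le n) (by positivity) (exp_nonneg _)
        _ = 3^(n+1) * exp (-c + (n+1) * (-8*c)) := by ring
    have h2 : -(exp (-c) * Real.sin y * r^(n+1))
        ≤ -(exp (-c * (2*((n:ℝ)+1)+1)^2) * ((2*(n:ℝ)+3) * Real.sin y)) := by
      have := mul_le_mul_of_nonneg_right hEB hy
      nlinarith
    have h3 := neg_abs_le ((-1:ℝ)^(n+1) * exp (-c * (2*((n:ℝ)+1)+1)^2)
        * Real.sin ((2*((n:ℝ)+1)+1)*y))
    linarith [neg_le_neg habs]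
  have hgeom : Summable fun n : ℕ => -(exp (-c) * Real.sin y * r^(n+1)) := by
    apply Summable.neg
    apply Summable.mul_left
    exact ((summable_geometric_of_lt_one hr0 (by linarith)).mul_left r).congr
      (fun n => by rw [← pow_succ']) |>.congr (fun n => rfl)
  have htail : -(exp (-c) * Real.sin y * (r * (1-r)⁻¹))
      ≤ ∑' n : ℕ, (-1:ℝ)^(n+1) * exp (-c * (2*((n:ℝ)+1)+1)^2) * Real.sin ((2*((n:ℝ)+1)+1)*y) := by
    have hsum_tail : Summable fun n : ℕ =>
        (-1:ℝ)^(n+1) * exp (-c * (2*((n:ℝ)+1)+1)^2) * Real.sin ((2*((n:ℝ)+1)+1)*y) := by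
      have := (summable_nat_add_iff 1).mpr (summable_S c y hc0)
      apply this.congr
      intro n
      push_cast
      norm_num
    have := Summable.tsum_le_tsum hbound hgeom hsum_tail
    refine le_trans (le_of_eq ?_) this
    rw [tsum_neg]
    congr 1
    have h1 : ∑' n : ℕ, exp (-c) * Real.sin y * r^(n+1)
        = exp (-c) * Real.sin y * ∑' n : ℕ, r^(n+1) := tsum_mul_left
    rw [h1]
    congr 1
    have h2 : ∑' n : ℕ, r^(n+1) = ∑' n : ℕ, r * r^n := by
      apply tsum_congr; intro n; rw [pow_succ']
    rw [h2, tsum_mul_left, tsum_geometric_of_lt_one hr0 (by linarith)]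
  have hzero : ∑' n : ℕ, (-1:ℝ)^n * exp (-c * (2*(n:ℝ)+1)^2) * Real.sin ((2*(n:ℝ)+1)*y)
      = exp (-c) * Real.sin y
        + ∑' n : ℕ, (-1:ℝ)^(n+1) * exp (-c * (2*((n:ℝ)+1)+1)^2) * Real.sin ((2*((n:ℝ)+1)+1)*y) := by
    rw [hS.tsum_eq_zero_add]
    congr 1
    · norm_num
    · apply tsum_congr; intro n; push_cast; norm_num
  rw [hzero]
  have hfrac : r * (1-r)⁻¹ < 1 := by
    rw [← div_eq_mul_inv, div_lt_one (by linarith)]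
    linarith
  have hpos : 0 ≤ exp (-c) * Real.sin y := by positivity
  nlinarith [htail, hpos, hfrac]
private lemma summable_E (c z : ℝ) (hc : 0 < c) :
    Summable fun n : ℕ => exp (-c * (2*(n:ℝ)+1)^2) * Real.cos ((2*(n:ℝ)+1)*z) := by
  apply summable_of_geom (exp (-c)) (exp (-4*c)) (exp_nonneg _)
    (exp_lt_one_iff.mpr (by linarith))
  intro n
  rw [← Real.exp_nat_mul, ← Real.exp_add]
  have h1 : |exp (-c * (2*(n:ℝ)+1)^2) * Real.cos ((2*(n:ℝ)+1)*z)|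
      ≤ exp (-c * (2*(n:ℝ)+1)^2) := by
    rw [abs_mul, abs_of_nonneg (exp_nonneg _)]
    calc exp (-c * (2*(n:ℝ)+1)^2) * |Real.cos ((2*(n:ℝ)+1)*z)|
        ≤ exp (-c * (2*(n:ℝ)+1)^2) * 1 :=
          mul_le_mul_of_nonneg_left (Real.abs_cos_le_one _) (exp_nonneg _)
      _ = _ := mul_one _
  refine h1.trans (Real.exp_le_exp.mpr ?_)
  nlinarith [Nat.cast_nonneg (α := ℝ) n, sq_nonneg ((n:ℝ))]

/-- The sine series in terms of the two theta sums. -/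
private lemma S_eq (c y : ℝ) (hc : 0 < c) :
    ∑' n : ℕ, (-1:ℝ)^n * exp (-c * (2*(n:ℝ)+1)^2) * Real.sin ((2*(n:ℝ)+1)*y)
      = ((∑' m : ℤ, exp (-(4*c) * (m:ℝ)^2) * Real.cos ((m:ℝ)*(2*(y+π/2))))
         - ∑' m : ℤ, exp (-c * (m:ℝ)^2) * Real.cos ((m:ℝ)*(y+π/2))) / 2 := by
  obtain ⟨z, hz_def⟩ : ∃ z : ℝ, z = y + π/2 := ⟨_, rfl⟩
  rw [← hz_def]
  -- Step 1 : LHS = - C where C is the odd cosine series at z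
  have hstep1 : ∑' n : ℕ, (-1:ℝ)^n * exp (-c * (2*(n:ℝ)+1)^2) * Real.sin ((2*(n:ℝ)+1)*y)
      = - ∑' n : ℕ, exp (-c * (2*(n:ℝ)+1)^2) * Real.cos ((2*(n:ℝ)+1)*z) := by
    rw [← tsum_neg]
    apply tsum_congr
    intro n
    have harg : (2*(n:ℝ)+1)*z = ((2*(n:ℝ)+1)*y + π/2) + (n:ℝ)*π := by rw [hz_def]; ring
    rw [harg, Real.cos_add_nat_mul_pi, Real.cos_add_pi_div_two]
    ring
  rw [hstep1]
  -- Step 2 : split the theta sum at scale c by parity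
  have sEven : Summable fun m : ℤ =>
      exp (-c * ((2*m : ℤ):ℝ)^2) * Real.cos (((2*m : ℤ):ℝ)*z) := by
    apply (summable_thetaterm (4*c) (2*z) (by linarith)).congr
    intro m; push_cast; ring_nf
  have base2 : Summable fun m : ℤ => exp (-c * ((2*m+1 : ℤ):ℝ)^2) := by
    apply (summable_gauss_int (4*c) (-(1:ℝ)/2) (by linarith)).congr
    intro m; congr 1; push_cast; ring
  have sOdd : Summable fun m : ℤ =>
      exp (-c * ((2*m+1 : ℤ):ℝ)^2) * Real.cos (((2*m+1 : ℤ):ℝ)*z) := by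
    apply summable_abs_iff.mp
    apply Summable.of_nonneg_of_le (fun _ => abs_nonneg _) _ base2
    intro m
    rw [abs_mul, abs_of_nonneg (exp_nonneg _)]
    calc exp (-c * ((2*m+1 : ℤ):ℝ)^2) * |Real.cos (((2*m+1 : ℤ):ℝ)*z)|
        ≤ exp (-c * ((2*m+1 : ℤ):ℝ)^2) * 1 :=
          mul_le_mul_of_nonneg_left (Real.abs_cos_le_one _) (exp_nonneg _)
      _ = _ := mul_one _
  have hsplitA := tsum_int_even_odd
    (f := fun m : ℤ => exp (-c * (m:ℝ)^2) * Real.cos ((m:ℝ)*z)) sEven sOdd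
  -- even part equals the theta sum at scale 4c
  have heven : ∑' m : ℤ, exp (-c * ((2*m : ℤ):ℝ)^2) * Real.cos (((2*m : ℤ):ℝ)*z)
      = ∑' m : ℤ, exp (-(4*c) * (m:ℝ)^2) * Real.cos ((m:ℝ)*(2*z)) := by
    apply tsum_congr; intro m; push_cast; ring_nf
  -- odd part equals twice the odd cosine series
  have s1 : Summable fun n : ℕ =>
      exp (-c * ((2*(n:ℤ)+1 : ℤ):ℝ)^2) * Real.cos (((2*(n:ℤ)+1 : ℤ):ℝ)*z) := by
    apply (summable_E c z hc).congr
    intro n; push_cast; ring_nf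
  have s2 : Summable fun n : ℕ =>
      exp (-c * ((2*(-((n:ℤ)+1))+1 : ℤ):ℝ)^2) * Real.cos (((2*(-((n:ℤ)+1))+1 : ℤ):ℝ)*z) := by
    apply (summable_E c z hc).congr
    intro n
    have hc1 : ((2*(-((n:ℤ)+1))+1 : ℤ):ℝ) = -(2*(n:ℝ)+1) := by push_cast; ring
    rw [hc1, show (-(2*(n:ℝ)+1))*z = -((2*(n:ℝ)+1)*z) by ring, Real.cos_neg, neg_sq]
  have hodd : ∑' m : ℤ, exp (-c * ((2*m+1 : ℤ):ℝ)^2) * Real.cos (((2*m+1 : ℤ):ℝ)*z)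
      = (∑' n : ℕ, exp (-c * (2*(n:ℝ)+1)^2) * Real.cos ((2*(n:ℝ)+1)*z))
        + ∑' n : ℕ, exp (-c * (2*(n:ℝ)+1)^2) * Real.cos ((2*(n:ℝ)+1)*z) := by
    have hsp : (∑' m : ℤ, exp (-c * ((2*m+1 : ℤ):ℝ)^2) * Real.cos (((2*m+1 : ℤ):ℝ)*z))
        = (∑' n : ℕ, exp (-c * ((2*(n:ℤ)+1 : ℤ):ℝ)^2) * Real.cos (((2*(n:ℤ)+1 : ℤ):ℝ)*z))
          + ∑' n : ℕ, exp (-c * ((2*(-((n:ℤ)+1))+1 : ℤ):ℝ)^2)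
              * Real.cos (((2*(-((n:ℤ)+1))+1 : ℤ):ℝ)*z) :=
      tsum_of_nat_of_neg_add_one
        (f := fun m : ℤ => exp (-c * ((2*m+1 : ℤ):ℝ)^2) * Real.cos (((2*m+1 : ℤ):ℝ)*z)) s1 s2
    rw [hsp]
    congr 1
    · apply tsum_congr; intro n; push_cast; ring_nf
    · apply tsum_congr
      intro n
      have hc1 : ((2*(-((n:ℤ)+1))+1 : ℤ):ℝ) = -(2*(n:ℝ)+1) := by push_cast; ring
      rw [hc1, show (-(2*(n:ℝ)+1))*z = -((2*(n:ℝ)+1)*z) by ring, Real.cos_neg, neg_sq]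
  rw [heven, hodd] at hsplitA
  linarith [hsplitA]

/-- Positivity of the odd sine theta series for `y ∈ [0, π/2]`. -/
private lemma S_nonneg (c y : ℝ) (hc : 0 < c) (hy : 0 ≤ y) (hy2 : y ≤ π/2) :
    0 ≤ ∑' n : ℕ, (-1:ℝ)^n * exp (-c * (2*(n:ℝ)+1)^2) * Real.sin ((2*(n:ℝ)+1)*y) := by
  have hπ : (0:ℝ) < π := Real.pi_pos
  rcases le_or_gt (1/4 : ℝ) c with h | h
  · exact S_nonneg_big c y h (Real.sin_nonneg_of_nonneg_of_le_pi hy (by linarith))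
  · rw [S_eq c y hc]
    have := theta_le c (y + π/2) hc h.le (by linarith) (by linarith)
    linarith

private lemma Fd_neg (d t k : ℝ) : Fd d t (-k) = Fd d t k := by
  unfold Fd
  apply tsum_congr
  intro m
  congr 1
  rw [show (2*(m:ℝ)+1) * π * (-k) / (2*d) = -((2*(m:ℝ)+1) * π * k / (2*d)) by ring,
    Real.cos_neg]

private lemma Fd_hasDerivAt (d t : ℝ) (hd : 0 < d) (ht : 0 < t) (k : ℝ) :
    HasDerivAt (Fd d t)
      (-(2/d) * ∑' n : ℕ, (-1:ℝ)^n * exp (-(π^2*t/(8*d^2)) * (2*(n:ℝ)+1)^2)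
        * Real.sin ((2*(n:ℝ)+1) * (π*k/(2*d)))) k := by
  have hπ : (0:ℝ) < π := Real.pi_pos
  have hc0 : (0:ℝ) < π^2*t/(8*d^2) := by positivity
  set g : ℕ → ℝ → ℝ := fun m x =>
    Real.exp (-(π ^ 2 * (2 * (m : ℝ) + 1) ^ 2 / (8 * d ^ 2)) * t) *
      (4 * (-1 : ℝ) ^ m / (π * (2 * (m : ℝ) + 1))) *
      Real.cos ((2 * (m : ℝ) + 1) * π * x / (2 * d)) with hg_def
  set g' : ℕ → ℝ → ℝ := fun m x =>
    Real.exp (-(π ^ 2 * (2 * (m : ℝ) + 1) ^ 2 / (8 * d ^ 2)) * t) *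
      (4 * (-1 : ℝ) ^ m / (π * (2 * (m : ℝ) + 1))) *
      (-Real.sin ((2 * (m : ℝ) + 1) * π * x / (2 * d)) * ((2 * (m : ℝ) + 1) * π / (2 * d)))
      with hg'_def
  have hgd : ∀ m x, HasDerivAt (g m) (g' m x) x := by
    intro m x
    have hB : HasDerivAt (fun x : ℝ => (2*(m:ℝ)+1) * π * x / (2*d))
        ((2*(m:ℝ)+1) * π / (2*d)) x := by
      simpa using ((hasDerivAt_id x).const_mul ((2*(m:ℝ)+1) * π)).div_const (2*d)
    exact (hB.cos).const_mul _
  have hub : ∀ m x, ‖g' m x‖ ≤ exp (-(π^2*t/(8*d^2)) * (2*(m:ℝ)+1)^2) * (2/d) := by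
    intro m x
    have h2m : (0:ℝ) < 2*(m:ℝ)+1 := by positivity
    have hE : Real.exp (-(π ^ 2 * (2 * (m : ℝ) + 1) ^ 2 / (8 * d ^ 2)) * t)
        = exp (-(π^2*t/(8*d^2)) * (2*(m:ℝ)+1)^2) := by congr 1; ring
    rw [Real.norm_eq_abs, hg'_def]
    simp only []
    rw [abs_mul, abs_mul, abs_mul, abs_neg, abs_of_nonneg (exp_nonneg _), hE]
    have hB : |4 * (-1:ℝ)^m / (π * (2*(m:ℝ)+1))| = 4 / (π * (2*(m:ℝ)+1)) := by
      rw [abs_div, abs_mul, abs_pow, abs_neg, abs_one, one_pow, mul_one,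
        abs_of_pos (by norm_num : (0:ℝ) < 4), abs_of_pos (by positivity)]
    have hA : |(2*(m:ℝ)+1) * π / (2*d)| = (2*(m:ℝ)+1) * π / (2*d) :=
      abs_of_pos (by positivity)
    rw [hB, hA]
    have hsin : |Real.sin ((2*(m:ℝ)+1) * π * x / (2*d))| ≤ 1 := Real.abs_sin_le_one _
    have hcoef : 4 / (π * (2*(m:ℝ)+1)) * ((2*(m:ℝ)+1) * π / (2*d)) = 2/d := by
      field_simp
      ring
    calc exp (-(π^2*t/(8*d^2)) * (2*(m:ℝ)+1)^2) * (4 / (π * (2*(m:ℝ)+1)))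
          * (|Real.sin ((2*(m:ℝ)+1) * π * x / (2*d))| * ((2*(m:ℝ)+1) * π / (2*d)))
        ≤ exp (-(π^2*t/(8*d^2)) * (2*(m:ℝ)+1)^2) * (4 / (π * (2*(m:ℝ)+1)))
          * (1 * ((2*(m:ℝ)+1) * π / (2*d))) := by
          apply mul_le_mul_of_nonneg_left _ (by positivity)
          apply mul_le_mul_of_nonneg_right hsin (by positivity)
      _ = exp (-(π^2*t/(8*d^2)) * (2*(m:ℝ)+1)^2) * (2/d) := by
          rw [one_mul, mul_assoc, hcoef]
  have hu : Summable fun m : ℕ => exp (-(π^2*t/(8*d^2)) * (2*(m:ℝ)+1)^2) * (2/d) := by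
    apply Summable.mul_right
    apply summable_of_geom (exp (-(π^2*t/(8*d^2)))) (exp (-4*(π^2*t/(8*d^2))))
      (exp_nonneg _) (exp_lt_one_iff.mpr (by linarith))
    intro n
    rw [← Real.exp_nat_mul, ← Real.exp_add, abs_of_nonneg (exp_nonneg _), Real.exp_le_exp]
    nlinarith [Nat.cast_nonneg (α := ℝ) n, sq_nonneg ((n:ℝ))]
  have hg0 : Summable fun m : ℕ => g m 0 := by
    apply summable_of_geom (exp (-(π^2*t/(8*d^2))) * (4/π)) (exp (-4*(π^2*t/(8*d^2))))
      (exp_nonneg _) (exp_lt_one_iff.mpr (by linarith))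
    intro n
    have h2m : (0:ℝ) < 2*(n:ℝ)+1 := by positivity
    rw [hg_def]
    simp only []
    rw [abs_mul, abs_mul, abs_of_nonneg (exp_nonneg _)]
    have hB : |4 * (-1:ℝ)^n / (π * (2*(n:ℝ)+1))| = 4 / (π * (2*(n:ℝ)+1)) := by
      rw [abs_div, abs_mul, abs_pow, abs_neg, abs_one, one_pow, mul_one,
        abs_of_pos (by norm_num : (0:ℝ) < 4), abs_of_pos (by positivity)]
    have hBle : 4 / (π * (2*(n:ℝ)+1)) ≤ 4/π := by
      apply div_le_div_of_nonneg_left (by norm_num) (by positivity)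
      nlinarith
    have hE : Real.exp (-(π ^ 2 * (2 * (n : ℝ) + 1) ^ 2 / (8 * d ^ 2)) * t)
        ≤ exp (-(π^2*t/(8*d^2))) * exp (-4*(π^2*t/(8*d^2)))^n := by
      rw [← Real.exp_nat_mul, ← Real.exp_add, Real.exp_le_exp,
        show -(π^2*(2*(n:ℝ)+1)^2/(8*d^2))*t = -(π^2*t/(8*d^2))*(2*(n:ℝ)+1)^2 by ring]
      nlinarith [mul_nonneg hc0.le (sq_nonneg ((n:ℝ))), Nat.cast_nonneg (α := ℝ) n]
    calc Real.exp (-(π ^ 2 * (2 * (n : ℝ) + 1) ^ 2 / (8 * d ^ 2)) * t)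
          * |4 * (-1:ℝ)^n / (π * (2*(n:ℝ)+1))| * |Real.cos ((2*(n:ℝ)+1) * π * 0 / (2*d))|
        ≤ Real.exp (-(π ^ 2 * (2 * (n : ℝ) + 1) ^ 2 / (8 * d ^ 2)) * t) * (4/π) * 1 := by
          rw [hB]
          apply mul_le_mul (mul_le_mul_of_nonneg_left hBle (exp_nonneg _))
            (Real.abs_cos_le_one _) (abs_nonneg _) (by positivity)
      _ ≤ (exp (-(π^2*t/(8*d^2))) * exp (-4*(π^2*t/(8*d^2)))^n) * (4/π) * 1 := by
          apply mul_le_mul_of_nonneg_right _ (by norm_num)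
          exact mul_le_mul_of_nonneg_right hE (by positivity)
      _ = exp (-(π^2*t/(8*d^2))) * (4/π) * exp (-4*(π^2*t/(8*d^2)))^n := by ring
  have hF := hasDerivAt_tsum hu hgd hub hg0 k
  have hFd_eq : Fd d t = fun x => ∑' m : ℕ, g m x := rfl
  rw [hFd_eq]
  refine hF.congr_deriv (Eq.symm ?_)
  rw [← tsum_mul_left]
  apply tsum_congr
  intro n
  rw [hg'_def]
  simp only []
  have h1 : π * (2*(n:ℝ)+1) ≠ 0 := by positivity
  have h2 : (2:ℝ)*d ≠ 0 := by positivity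
  have e_exp : -(π^2 * (2*(n:ℝ)+1)^2 / (8*d^2)) * t = -(π^2*t/(8*d^2)) * (2*(n:ℝ)+1)^2 := by
    ring
  have e_arg : (2*(n:ℝ)+1) * π * k / (2*d) = (2*(n:ℝ)+1) * (π*k/(2*d)) := by ring
  rw [e_exp, e_arg]
  field_simp
  ring
theorem Fd_le_Fd_zero (d t : ℝ) (hd : 0 < d) (ht : 0 < t) :
    (∀ k ∈ Set.Icc (-d) d, Fd d t k ≤ Fd d t 0) ∧
    (⨆ k : Set.Icc (-d) d, Fd d t (k : ℝ)) = Fd d t 0 := by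
  have hπ : (0:ℝ) < π := Real.pi_pos
  have hc0 : (0:ℝ) < π^2*t/(8*d^2) := by positivity
  have hdiff : Differentiable ℝ (Fd d t) :=
    fun x => (Fd_hasDerivAt d t hd ht x).differentiableAt
  have hant : AntitoneOn (Fd d t) (Set.Icc 0 d) := by
    apply antitoneOn_of_deriv_nonpos (convex_Icc 0 d) hdiff.continuous.continuousOn
      hdiff.differentiableOn
    intro x hx
    rw [interior_Icc, Set.mem_Ioo] at hx
    rw [(Fd_hasDerivAt d t hd ht x).deriv]
    have hy2 : π*x/(2*d) ≤ π/2 := by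
      rw [div_le_div_iff₀ (by positivity) (by norm_num : (0:ℝ) < 2)]
      nlinarith [hx.2]
    have hS := S_nonneg (π^2*t/(8*d^2)) (π*x/(2*d)) hc0
      (div_nonneg (by nlinarith [hx.1]) (by positivity)) hy2
    rw [neg_mul]
    exact neg_nonpos.mpr (mul_nonneg (by positivity) hS)
  have hpart1 : ∀ k ∈ Set.Icc (-d) d, Fd d t k ≤ Fd d t 0 := by
    intro k hk
    rw [Set.mem_Icc] at hk
    rcases le_or_gt 0 k with h0 | h0
    · exact hant (Set.mem_Icc.mpr ⟨le_refl 0, hd.le⟩) (Set.mem_Icc.mpr ⟨h0, hk.2⟩) h0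
    · have he : Fd d t k = Fd d t (-k) := (Fd_neg d t k).symm
      rw [he]
      exact hant (Set.mem_Icc.mpr ⟨le_refl 0, hd.le⟩)
        (Set.mem_Icc.mpr ⟨by linarith, by linarith⟩) (by linarith)
  refine ⟨hpart1, ?_⟩
  haveI : Nonempty (Set.Icc (-d) d) := ⟨⟨0, Set.mem_Icc.mpr ⟨by linarith, by linarith⟩⟩⟩
  apply le_antisymm
  · exact ciSup_le (fun k => hpart1 k k.2)
  · have hbdd : BddAbove (Set.range fun k : Set.Icc (-d) d => Fd d t (k:ℝ)) := by
      refine ⟨Fd d t 0, ?_⟩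
      rintro x ⟨k, rfl⟩
      exact hpart1 k k.2
    exact le_ciSup hbdd (⟨0, Set.mem_Icc.mpr ⟨by linarith, by linarith⟩⟩ : Set.Icc (-d) d)
end
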